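/- arXiv:1605.00405 — 4 statements merged into one kernel-verified Lean document; each statement's English description precedes it below -/
import Mathlib

section
/- Let S ⊆ ℝ^N be an open convex set, f : S → ℝ twice continuously differentiable with sup_{x ∈ S} ‖∇²f(x)‖₂ ≤ L < ∞, and 0 < α < 1/L. Then the gradient descent map g(x) = x − α∇f(x) is a C¹ diffeomorphism from S onto its image g(S). -/
open InnerProductSpace Set Filter Topology

/-- Under bounded Hessian on an open convex set and `0 < α < 1/L`,
the gradient descent map `g x = x - α • ∇f x` is a C¹ diffeomorphism from `S`
onto its image `g '' S`: it is C¹ on `S`, injective on `S`, and admits a C¹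
inverse on `g '' S`. -/
theorem gradient_descent_diffeomorphism
    {N : ℕ} (S : Set (EuclideanSpace ℝ (Fin N))) (hS : IsOpen S) (hconv : Convex ℝ S)
    (f : EuclideanSpace ℝ (Fin N) → ℝ) (hf : ContDiffOn ℝ 2 f S)
    (L : ℝ) (hL : ∀ x ∈ S, ‖fderiv ℝ (gradient f) x‖ ≤ L)
    (α : ℝ) (hα : 0 < α) (hαL : α < 1 / L)
    (g : EuclideanSpace ℝ (Fin N) → EuclideanSpace ℝ (Fin N))
    (hg : ∀ x, g x = x - α • gradient f x) :
    ContDiffOn ℝ 1 g S ∧ Set.InjOn g S ∧ IsOpen (g '' S) ∧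
      ∃ h : EuclideanSpace ℝ (Fin N) → EuclideanSpace ℝ (Fin N),
        ContDiffOn ℝ 1 h (g '' S) ∧ ∀ x ∈ S, h (g x) = x := by
  have hL0 : 0 < L := by
    by_contra hc
    push_neg at hc
    have : (1 : ℝ) / L ≤ 0 := one_div_nonpos.mpr hc
    linarith
  have hαL' : α * L < 1 := (lt_div_iff₀ hL0).mp hαL
  have hfd : ContDiffOn ℝ 1 (fderiv ℝ f) S := hf.fderiv_of_isOpen (m := 1) hS (by norm_num)
  have hgradC : ContDiffOn ℝ 1 (gradient f) S := by
    have he : gradient f = fun x => (toDual ℝ (EuclideanSpace ℝ (Fin N))).symm (fderiv ℝ f x) := rfl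
    rw [he]
    exact (toDual ℝ (EuclideanSpace ℝ (Fin N))).symm.contDiff.comp_contDiffOn hfd
  have hgeq : g = fun x => x - α • gradient f x := funext hg
  have hgC : ContDiffOn ℝ 1 g S := by
    rw [hgeq]
    exact contDiffOn_id.sub (hgradC.const_smul α)
  have hgdiff : ∀ x ∈ S, DifferentiableAt ℝ (gradient f) x := fun x hx =>
    ((hgradC x hx).contDiffAt (hS.mem_nhds hx)).differentiableAt one_ne_zero
  have hlip : ∀ x ∈ S, ∀ y ∈ S, ‖gradient f y - gradient f x‖ ≤ L * ‖y - x‖ := fun x hx y hy =>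
    hconv.norm_image_sub_le_of_norm_fderiv_le hgdiff hL hx hy
  have hinj : Set.InjOn g S := by
    intro x hx y hy hxy
    rw [hg x, hg y] at hxy
    have h1 : x - y = α • (gradient f x - gradient f y) := by
      rw [smul_sub]
      linear_combination (norm := module) hxy
    by_contra hne
    have hpos : 0 < ‖x - y‖ := by
      rw [norm_pos_iff, sub_ne_zero]; exact hne
    have h2 : ‖x - y‖ ≤ α * L * ‖x - y‖ := by
      calc ‖x - y‖ = α * ‖gradient f x - gradient f y‖ := by
            rw [h1, norm_smul, Real.norm_eq_abs, abs_of_pos hα]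
        _ ≤ α * (L * ‖x - y‖) :=
            mul_le_mul_of_nonneg_left
              (by simpa [norm_sub_rev x y] using hlip y hy x hx) hα.le
        _ = α * L * ‖x - y‖ := by ring
    nlinarith
  -- invertible derivative data at each point of S
  have hT : ∀ x ∈ S, ‖α • fderiv ℝ (gradient f) x‖ < 1 := by
    intro x hx
    rw [norm_smul, Real.norm_eq_abs, abs_of_pos hα]
    calc α * ‖fderiv ℝ (gradient f) x‖ ≤ α * L :=
          mul_le_mul_of_nonneg_left (hL x hx) hα.le
      _ < 1 := hαL'
  have hgd : ∀ x (hx : x ∈ S), HasFDerivAt g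
      ((ContinuousLinearEquiv.ofUnit (Units.oneSub _ (hT x hx)) : (EuclideanSpace ℝ (Fin N)) ≃L[ℝ] (EuclideanSpace ℝ (Fin N))) : (EuclideanSpace ℝ (Fin N)) →L[ℝ] (EuclideanSpace ℝ (Fin N))) x := by
    intro x hx
    have : ((ContinuousLinearEquiv.ofUnit (Units.oneSub _ (hT x hx)) : (EuclideanSpace ℝ (Fin N)) ≃L[ℝ] (EuclideanSpace ℝ (Fin N))) : (EuclideanSpace ℝ (Fin N)) →L[ℝ] (EuclideanSpace ℝ (Fin N)))
        = ContinuousLinearMap.id ℝ (EuclideanSpace ℝ (Fin N)) - α • fderiv ℝ (gradient f) x := rfl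
    rw [this, hgeq]
    exact (hasFDerivAt_id x).sub ((hgdiff x hx).hasFDerivAt.const_smul α)
  have hct : ∀ x ∈ S, ContDiffAt ℝ 1 g x := fun x hx => (hgC x hx).contDiffAt (hS.mem_nhds hx)
  have hB : ∀ x (hx : x ∈ S), HasStrictFDerivAt g
      ((ContinuousLinearEquiv.ofUnit (Units.oneSub _ (hT x hx)) : (EuclideanSpace ℝ (Fin N)) ≃L[ℝ] (EuclideanSpace ℝ (Fin N))) : (EuclideanSpace ℝ (Fin N)) →L[ℝ] (EuclideanSpace ℝ (Fin N))) x :=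
    fun x hx => (hct x hx).hasStrictFDerivAt' (hgd x hx) one_ne_zero
  have hopen : IsOpen (g '' S) := by
    rw [isOpen_iff_mem_nhds]
    rintro _ ⟨x, hx, rfl⟩
    rw [← (hB x hx).map_nhds_eq_of_equiv]
    exact Filter.image_mem_map (hS.mem_nhds hx)
  set h : (EuclideanSpace ℝ (Fin N)) → (EuclideanSpace ℝ (Fin N)) := Function.invFunOn g S with hh
  have hleft : ∀ x ∈ S, h (g x) = x := fun x hx => hinj.leftInvOn_invFunOn hx
  refine ⟨hgC, hinj, hopen, h, ?_, hleft⟩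
  rintro _ ⟨x, hx, rfl⟩
  set B := (ContinuousLinearEquiv.ofUnit (Units.oneSub _ (hT x hx)) : (EuclideanSpace ℝ (Fin N)) ≃L[ℝ] (EuclideanSpace ℝ (Fin N))) with hBdef
  set φ : (EuclideanSpace ℝ (Fin N)) → (EuclideanSpace ℝ (Fin N)) := (hct x hx).localInverse (hgd x hx) one_ne_zero with hφdef
  have hφc : ContDiffAt ℝ 1 φ (g x) := (hct x hx).to_localInverse (hgd x hx) one_ne_zero
  have hφeq : φ = (hB x hx).localInverse g B x := rfl
  have hrinv : ∀ᶠ z in 𝓝 (g x), g (φ z) = z := by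
    rw [hφeq]; exact (hB x hx).eventually_right_inverse
  have hφx : φ (g x) = x := (hct x hx).localInverse_apply_image (hgd x hx) one_ne_zero
  have hmem : ∀ᶠ z in 𝓝 (g x), φ z ∈ S :=
    hφc.continuousAt.eventually_mem (hS.mem_nhds (by rw [hφx]; exact hx))
  have heq : ∀ᶠ z in 𝓝[g '' S] (g x), h z = φ z := by
    filter_upwards [nhdsWithin_le_nhds hrinv, nhdsWithin_le_nhds hmem, self_mem_nhdsWithin]
      with z h1 h2 hz
    obtain ⟨w, hw, rfl⟩ := hz
    rw [hleft w hw]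
    exact hinj hw h2 h1.symm
  have hhx : h (g x) = φ (g x) := by rw [hleft x hx, hφx]
  exact hφc.contDiffWithinAt.congr_of_eventuallyEq heq hhx
end

section
/- Let f : ℝ^N → ℝ be twice continuously differentiable with sup_{x} ‖∇²f(x)‖₂ ≤ L < ∞, and let 0 < α < 1/L. Then the set of initial conditions x ∈ ℝ^N for which gradient descent x_{k+1} = x_k − α∇f(x_k) converges to a strict saddle point of f has Lebesgue measure zero, even when the critical points of f are not isolated. -/
open MeasureTheory Filter Topology Set
open scoped NNReal ENNReal

section GradientDescentSaddle

variable {N : ℕ}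
local notation "E" => EuclideanSpace ℝ (Fin N)

/-- A subset of Euclidean space of Hausdorff dimension `< N` is Lebesgue null. -/
lemma volume_zero_of_dimH_lt {N : ℕ} {s : Set (EuclideanSpace ℝ (Fin N))}
    (h : dimH s < N) : volume s = 0 := by
  set e := (MeasurableEquiv.toLp 2 (Fin N → ℝ)).symm
  have hvp := EuclideanSpace.volume_preserving_symm_measurableEquiv_toLp (Fin N)
  have hce : ⇑e = ⇑(EuclideanSpace.equiv (Fin N) ℝ) := rfl
  have hdim : dimH (⇑e '' s) < ((N : ℝ≥0) : ℝ≥0∞) := by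
    rw [hce, ContinuousLinearEquiv.dimH_image]
    simpa using h
  have hH : μH[((N : ℝ≥0) : ℝ)] (⇑e '' s) = 0 :=
    hausdorffMeasure_of_dimH_lt hdim
  have hvol : volume (⇑e '' s) = 0 := by
    have hpi : (μH[((N : ℝ≥0) : ℝ)] : Measure (Fin N → ℝ)) = volume := by
      have := hausdorffMeasure_pi_real (ι := Fin N)
      simpa using this
    rw [← hpi]; exact hH
  have hsub : s ⊆ ⇑e ⁻¹' (toMeasurable volume (⇑e '' s)) :=
    (subset_preimage_image _ _).trans (preimage_mono (subset_toMeasurable _ _))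
  refine measure_mono_null hsub ?_
  rw [hvp.measure_preimage (measurableSet_toMeasurable _ _).nullMeasurableSet]
  simpa using hvol

lemma gradC1 {f : E → ℝ} (hf : ContDiff ℝ 2 f) : ContDiff ℝ 1 (gradient f) := by
  have h1 : ContDiff ℝ 1 (fderiv ℝ f) := hf.fderiv_right (le_refl _)
  have : gradient f = fun x => (InnerProductSpace.toDual ℝ E).symm (fderiv ℝ f x) := rfl
  rw [this]
  exact (InnerProductSpace.toDual ℝ E).symm.contDiff.comp h1

lemma inner_fderiv_gradient {f : E → ℝ} (hf : ContDiff ℝ 2 f) (x u v : E) :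
    (inner ℝ (fderiv ℝ (gradient f) x u) v : ℝ) = fderiv ℝ (fderiv ℝ f) x u v := by
  have h1 : ContDiff ℝ 1 (fderiv ℝ f) := hf.fderiv_right (le_refl _)
  have hdF : DifferentiableAt ℝ (fderiv ℝ f) x := (h1.differentiable one_ne_zero) x
  have hdg : DifferentiableAt ℝ (gradient f) x := ((gradC1 hf).differentiable one_ne_zero) x
  have hA : HasFDerivAt (fun y => (innerSL ℝ v) (gradient f y))
      ((innerSL ℝ v).comp (fderiv ℝ (gradient f) x)) x :=
    ((innerSL ℝ v).hasFDerivAt).comp x hdg.hasFDerivAt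
  have hB : HasFDerivAt (fun y => (ContinuousLinearMap.apply ℝ ℝ v) (fderiv ℝ f y))
      ((ContinuousLinearMap.apply ℝ ℝ v).comp (fderiv ℝ (fderiv ℝ f) x)) x :=
    ((ContinuousLinearMap.apply ℝ ℝ v).hasFDerivAt).comp x hdF.hasFDerivAt
  have key : (fun y => (innerSL ℝ v) (gradient f y))
      = (fun y => (ContinuousLinearMap.apply ℝ ℝ v) (fderiv ℝ f y)) := by
    funext y
    simp only [innerSL_apply_apply, ContinuousLinearMap.apply_apply]
    rw [real_inner_comm]
    exact InnerProductSpace.toDual_symm_apply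
  rw [key] at hA
  have := hA.unique hB
  have h2 := congrFun (congrArg (fun (T : E →L[ℝ] ℝ) => (T : E → ℝ)) this) u
  simp only [ContinuousLinearMap.coe_comp', Function.comp_apply, innerSL_apply_apply,
    ContinuousLinearMap.apply_apply] at h2
  rw [real_inner_comm] at h2
  exact h2

lemma fderiv_gradient_symm {f : E → ℝ} (hf : ContDiff ℝ 2 f) (x u v : E) :
    (inner ℝ (fderiv ℝ (gradient f) x u) v : ℝ) = inner ℝ (fderiv ℝ (gradient f) x v) u := by
  rw [inner_fderiv_gradient hf, inner_fderiv_gradient hf]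
  exact (hf.contDiffAt.isSymmSndFDerivAt (by norm_num)) u v

lemma g_hasFDerivAt {f : E → ℝ} (hf : ContDiff ℝ 2 f) (α : ℝ) (x : E) :
    HasFDerivAt (fun y => y - α • gradient f y)
      (ContinuousLinearMap.id ℝ E - α • fderiv ℝ (gradient f) x) x := by
  have hdg : DifferentiableAt ℝ (gradient f) x := by
    have h1 : ContDiff ℝ 1 (gradient f) := by
      have h2 : ContDiff ℝ 1 (fderiv ℝ f) := hf.fderiv_right (le_refl _)
      exact (InnerProductSpace.toDual ℝ E).symm.contDiff.comp h2
    exact (h1.differentiable one_ne_zero) x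
  exact (hasFDerivAt_id x).sub ((hdg.hasFDerivAt.const_smul α))

/-- The gradient is `L`-Lipschitz-type bound. -/
lemma grad_lip {f : E → ℝ} (hf : ContDiff ℝ 2 f) {L : ℝ}
    (hL : ∀ x, ‖fderiv ℝ (gradient f) x‖ ≤ L) (x y : E) :
    ‖gradient f x - gradient f y‖ ≤ L * ‖x - y‖ := by
  have h1 : ContDiff ℝ 1 (gradient f) := by
    have h2 : ContDiff ℝ 1 (fderiv ℝ f) := hf.fderiv_right (le_refl _)
    exact (InnerProductSpace.toDual ℝ E).symm.contDiff.comp h2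
  exact (convex_univ : Convex ℝ (univ : Set (EuclideanSpace ℝ (Fin N)))).norm_image_sub_le_of_norm_fderiv_le
    (fun z _ => (h1.differentiable one_ne_zero) z) (fun z _ => hL z) (mem_univ y) (mem_univ x)

/-- `g` is anti-Lipschitz. -/
lemma g_antilip {f : E → ℝ} (hf : ContDiff ℝ 2 f) {L α : ℝ}
    (hL : ∀ x, ‖fderiv ℝ (gradient f) x‖ ≤ L) (hα : 0 < α) (hαL : α * L < 1) :
    AntilipschitzWith ((1 - α * L)⁻¹.toNNReal) (fun y : E => y - α • gradient f y) := by
  have hc : 0 < 1 - α * L := by linarith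
  apply AntilipschitzWith.of_le_mul_dist
  intro x y
  simp only [dist_eq_norm]
  have h1 : ‖(x - α • gradient f x) - (y - α • gradient f y)‖ ≥ (1 - α * L) * ‖x - y‖ := by
    have h2 : (x - α • gradient f x) - (y - α • gradient f y)
        = (x - y) - α • (gradient f x - gradient f y) := by
      simp only [smul_sub]; abel
    rw [h2]
    have h3 : ‖α • (gradient f x - gradient f y)‖ ≤ α * L * ‖x - y‖ := by
      rw [norm_smul, Real.norm_eq_abs, abs_of_pos hα]
      calc α * ‖gradient f x - gradient f y‖ ≤ α * (L * ‖x - y‖) := by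
            exact mul_le_mul_of_nonneg_left (grad_lip hf hL x y) hα.le
        _ = α * L * ‖x - y‖ := by ring
    calc ‖(x - y) - α • (gradient f x - gradient f y)‖
        ≥ ‖x - y‖ - ‖α • (gradient f x - gradient f y)‖ := norm_sub_norm_le _ _
      _ ≥ ‖x - y‖ - α * L * ‖x - y‖ := by linarith
      _ = (1 - α * L) * ‖x - y‖ := by ring
  rw [Real.coe_toNNReal _ (by positivity)]
  rw [ge_iff_le] at h1
  calc ‖x - y‖ = (1 - α * L)⁻¹ * ((1 - α * L) * ‖x - y‖) := by field_simp
    _ ≤ (1 - α * L)⁻¹ * ‖(x - α • gradient f x) - (y - α • gradient f y)‖ := by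
        exact mul_le_mul_of_nonneg_left h1 (inv_pos.mpr hc).le

/-- Linearization estimate on a ball. -/
lemma g_linearization {f : E → ℝ} (hf : ContDiff ℝ 2 f) {α ε r : ℝ} (hα : 0 < α) (p : E)
    (hball : ∀ z ∈ Metric.closedBall p r, ‖fderiv ℝ (gradient f) z - fderiv ℝ (gradient f) p‖ ≤ ε / α)
    {x y : E} (hx : x ∈ Metric.closedBall p r) (hy : y ∈ Metric.closedBall p r) :
    ‖(x - α • gradient f x) - (y - α • gradient f y)
      - ((x - y) - α • (fderiv ℝ (gradient f) p) (x - y))‖ ≤ ε * ‖x - y‖ := by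
  set H := fun z => fderiv ℝ (gradient f) z with hH
  set h := fun z : E => α • ((H p) z) - α • gradient f z with hh
  have h1 : ContDiff ℝ 1 (gradient f) := by
    have h2 : ContDiff ℝ 1 (fderiv ℝ f) := hf.fderiv_right (le_refl _)
    exact (InnerProductSpace.toDual ℝ E).symm.contDiff.comp h2
  have hder : ∀ z ∈ Metric.closedBall p r,
      HasFDerivWithinAt h (α • ((H p) - H z)) (Metric.closedBall p r) z := by
    intro z hz
    have hdg : DifferentiableAt ℝ (gradient f) z := (h1.differentiable one_ne_zero) z
    have : HasFDerivAt h (α • ((H p) - H z)) z := by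
      have ha : HasFDerivAt (fun w : E => α • ((H p) w)) (α • (H p)) z :=
        ((H p).hasFDerivAt).const_smul α
      have hb : HasFDerivAt (fun w : E => α • gradient f w) (α • H z) z :=
        hdg.hasFDerivAt.const_smul α
      rw [smul_sub]; exact ha.sub hb
    exact this.hasFDerivWithinAt
  have hbd : ∀ z ∈ Metric.closedBall p r, ‖α • ((H p) - H z)‖ ≤ ε := by
    intro z hz
    rw [norm_smul, Real.norm_eq_abs, abs_of_pos hα]
    have := hball z hz
    have h2 : ‖H p - H z‖ = ‖H z - H p‖ := norm_sub_rev _ _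
    rw [h2]
    calc α * ‖H z - H p‖ ≤ α * (ε / α) := mul_le_mul_of_nonneg_left this hα.le
      _ = ε := by field_simp
  have key := (convex_closedBall p r).norm_image_sub_le_of_norm_hasFDerivWithin_le
    hder hbd hy hx
  have heq2 : (x - α • gradient f x) - (y - α • gradient f y)
      - ((x - y) - α • (H p) (x - y)) = h x - h y := by
    simp only [hh, map_sub, smul_sub]; abel
  rw [heq2]
  exact key

set_option maxHeartbeats 1600000 in
lemma local_saddle_dimH {f : E → ℝ} (hf : ContDiff ℝ 2 f) {L α : ℝ}
    (hL : ∀ x, ‖fderiv ℝ (gradient f) x‖ ≤ L) (hα : 0 < α) (hαL : α * L < 1)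
    (p : E) (hsad : ∃ v : E, (inner ℝ (fderiv ℝ (gradient f) p v) v : ℝ) < 0) :
    1 ≤ N ∧ ∃ r > 0, dimH {x : E | ∀ k,
      (fun y => y - α • gradient f y)^[k] x ∈ Metric.closedBall p r} ≤ ((N - 1 : ℕ) : ℝ≥0∞) := by
  classical
  set Hp : E →L[ℝ] E := fderiv ℝ (gradient f) p with hHp
  -- spectral decomposition
  have hsymm : (Hp : E →ₗ[ℝ] E).IsSymmetric := by
    intro u v
    have h1 : (inner ℝ (Hp u) v : ℝ) = inner ℝ (Hp v) u := fderiv_gradient_symm hf p u v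
    exact h1.trans (real_inner_comm _ _)
  set b := hsymm.eigenvectorBasis finrank_euclideanSpace_fin with hb
  set lam := hsymm.eigenvalues finrank_euclideanSpace_fin with hlam
  have heig : ∀ i, Hp (b i) = lam i • b i := fun i =>
    (hsymm.hasEigenvector_eigenvectorBasis finrank_euclideanSpace_fin i).apply_eq_smul
  have hbnorm : ∀ i, ‖b i‖ = 1 := fun i => b.orthonormal.1 i
  have hlam_le : ∀ i, |lam i| ≤ L := by
    intro i
    have h1 : (inner ℝ (Hp (b i)) (b i) : ℝ) = lam i := by
      rw [heig i, real_inner_smul_left, real_inner_self_eq_norm_sq, hbnorm i]; ring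
    calc |lam i| = |(inner ℝ (Hp (b i)) (b i) : ℝ)| := by rw [h1]
      _ ≤ ‖Hp (b i)‖ * ‖b i‖ := abs_real_inner_le_norm _ _
      _ ≤ (‖Hp‖ * ‖b i‖) * ‖b i‖ :=
          mul_le_mul_of_nonneg_right (Hp.le_opNorm _) (norm_nonneg _)
      _ ≤ L := by rw [hbnorm i, mul_one, mul_one]; exact hL p
  -- the unstable index set
  set Iu : Finset (Fin N) := Finset.univ.filter (fun i => lam i < 0) with hIudef
  -- coordinates
  set c : Fin N → E → ℝ := fun i w => (inner ℝ (b i) w : ℝ) with hc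
  have hc_sub : ∀ i (u v : E), c i (u - v) = c i u - c i v := by
    intro i u v
    show (inner ℝ (b i) (u - v) : ℝ) = (inner ℝ (b i) u : ℝ) - (inner ℝ (b i) v : ℝ)
    exact inner_sub_right _ _ _
  -- norms of coordinate sums
  have hnorm : ∀ (s : Finset (Fin N)) (w : E),
      ‖∑ i ∈ s, c i w • b i‖ ^ 2 = ∑ i ∈ s, (c i w) ^ 2 := by
    intro s w
    rw [← real_inner_self_eq_norm_sq]
    rw [b.orthonormal.inner_sum (fun i => c i w) (fun i => c i w) s]
    simp [sq, starRingEnd_apply, star_trivial]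
  have hparseval : ∀ w : E, ‖w‖ ^ 2 = ∑ i, (c i w) ^ 2 := by
    intro w
    have := hnorm Finset.univ w
    rwa [b.sum_repr' w] at this
  set Pu : E → E := fun w => ∑ i ∈ Iu, c i w • b i with hPu
  set Ps : E → E := fun w => ∑ i ∈ Iuᶜ, c i w • b i with hPs
  have hsplit : ∀ w : E, Pu w + Ps w = w := by
    intro w
    rw [hPu, hPs, Finset.sum_add_sum_compl]
    exact b.sum_repr' w
  have hPu_le : ∀ w : E, ‖Pu w‖ ≤ ‖w‖ := by
    intro w
    have h1 : ‖Pu w‖ ^ 2 ≤ ‖w‖ ^ 2 := by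
      rw [hnorm Iu w, hparseval w]
      exact Finset.sum_le_sum_of_subset_of_nonneg (Finset.subset_univ _)
        (fun i _ _ => sq_nonneg _)
    nlinarith [norm_nonneg (Pu w), norm_nonneg w]
  have hPs_le : ∀ w : E, ‖Ps w‖ ≤ ‖w‖ := by
    intro w
    have h1 : ‖Ps w‖ ^ 2 ≤ ‖w‖ ^ 2 := by
      rw [hnorm Iuᶜ w, hparseval w]
      exact Finset.sum_le_sum_of_subset_of_nonneg (Finset.subset_univ _)
        (fun i _ _ => sq_nonneg _)
    nlinarith [norm_nonneg (Ps w), norm_nonneg w]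
  have hPu_sub : ∀ u v : E, Pu (u - v) = Pu u - Pu v := by
    intro u v
    simp only [hPu, hc_sub, sub_smul, Finset.sum_sub_distrib]
  have hPs_sub : ∀ u v : E, Ps (u - v) = Ps u - Ps v := by
    intro u v
    simp only [hPs, hc_sub, sub_smul, Finset.sum_sub_distrib]
  -- nonemptiness of Iu
  have hIu : Iu.Nonempty := by
    by_contra hempty
    rw [Finset.not_nonempty_iff_eq_empty] at hempty
    have hpos : ∀ i, 0 ≤ lam i := by
      intro i
      by_contra hneg
      push_neg at hneg
      have : i ∈ Iu := by rw [hIudef]; simp [hneg]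
      rw [hempty] at this; simp at this
    obtain ⟨v, hv⟩ := hsad
    have h5 : Hp (∑ i, (inner ℝ (b i) v : ℝ) • b i)
        = ∑ i, ((inner ℝ (b i) v : ℝ) * lam i) • b i := by
      rw [map_sum]
      congr 1
      funext i
      rw [ContinuousLinearMap.map_smul, heig i, smul_smul]
    have hform : (inner ℝ (Hp v) v : ℝ) = ∑ i, lam i * (c i v) ^ 2 := by
      conv_lhs => rw [← b.sum_repr' v]
      rw [h5]
      rw [b.orthonormal.inner_sum (fun i => (inner ℝ (b i) v : ℝ) * lam i)
        (fun i => (inner ℝ (b i) v : ℝ)) Finset.univ]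
      simp only [starRingEnd_apply, star_trivial, hc]
      congr 1
      funext i
      ring
    rw [hform] at hv
    have : (0:ℝ) ≤ ∑ i, lam i * (c i v) ^ 2 :=
      Finset.sum_nonneg fun i _ => mul_nonneg (hpos i) (sq_nonneg _)
    linarith
  have hN : 1 ≤ N := by
    obtain ⟨i, _⟩ := hIu
    exact Nat.one_le_iff_ne_zero.mpr (by rintro rfl; exact i.elim0)
  -- the spectral gap constants
  set δ : ℝ := (Iu.image (fun i => -lam i)).min' (hIu.image _) with hδdef
  have hδpos : 0 < δ := by
    have hmem := (Iu.image (fun i => -lam i)).min'_mem (hIu.image _)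
    rw [Finset.mem_image] at hmem
    obtain ⟨i, hi, hival⟩ := hmem
    rw [hδdef, ← hival]
    have : lam i < 0 := by
      rw [hIudef] at hi; simpa using hi
    linarith
  have hδle : ∀ i ∈ Iu, δ ≤ -lam i := by
    intro i hi
    exact Finset.min'_le _ _ (Finset.mem_image_of_mem _ hi)
  set ε : ℝ := α * δ / 4 with hεdef
  have hεpos : 0 < ε := by
    have := mul_pos hα hδpos
    rw [hεdef]; linarith
  set μ : ℝ := 1 + α * δ with hμdef
  set ρ : ℝ := 1 + α * δ / 2 with hρdef
  have hρ1 : 1 < ρ := by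
    have := mul_pos hα hδpos
    rw [hρdef]; linarith
  -- linear map estimates
  set A : E → E := fun w => w - α • Hp w with hA
  have hcA : ∀ i w, c i (A w) = (1 - α * lam i) * c i w := by
    intro i w
    have h6 : (inner ℝ (b i) (Hp w) : ℝ) = lam i * (inner ℝ (b i) w : ℝ) := by
      rw [real_inner_comm]
      have h7 : (inner ℝ (Hp w) (b i) : ℝ) = (inner ℝ (Hp (b i)) w : ℝ) :=
        fderiv_gradient_symm hf p w (b i)
      rw [h7, heig i, real_inner_smul_left]
    show (inner ℝ (b i) (w - α • Hp w) : ℝ) = (1 - α * lam i) * (inner ℝ (b i) w : ℝ)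
    rw [inner_sub_right, real_inner_smul_right, h6]
    ring
  have hμIu : ∀ i ∈ Iu, μ ≤ 1 - α * lam i := by
    intro i hi
    have := hδle i hi
    rw [hμdef]
    nlinarith
  have hsIu : ∀ i ∉ Iu, (1 - α * lam i) ^ 2 ≤ 1 := by
    intro i hi
    have h0 : 0 ≤ lam i := by
      by_contra hneg
      push_neg at hneg
      exact hi (by rw [hIudef]; simp [hneg])
    have h1 : lam i ≤ L := (abs_le.mp (hlam_le i)).2
    have h2 : α * lam i ≤ α * L := mul_le_mul_of_nonneg_left h1 hα.le
    have h3 : 0 ≤ α * lam i := by positivity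
    nlinarith
  have hμpos : 0 < μ := by
    have := mul_pos hα hδpos
    rw [hμdef]; linarith
  have hPuA : ∀ w : E, μ * ‖Pu w‖ ≤ ‖Pu (A w)‖ := by
    intro w
    have h1 : ‖Pu (A w)‖ ^ 2 ≥ μ ^ 2 * ‖Pu w‖ ^ 2 := by
      rw [hnorm Iu (A w), hnorm Iu w, Finset.mul_sum]
      apply Finset.sum_le_sum
      intro i hi
      rw [hcA i w]
      have h2 := hμIu i hi
      have h4 : μ ^ 2 ≤ (1 - α * lam i) ^ 2 := by nlinarith
      calc μ ^ 2 * c i w ^ 2 ≤ (1 - α * lam i) ^ 2 * c i w ^ 2 :=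
            mul_le_mul_of_nonneg_right h4 (sq_nonneg _)
        _ = ((1 - α * lam i) * c i w) ^ 2 := by ring
    nlinarith [norm_nonneg (Pu (A w)), norm_nonneg (Pu w), mul_nonneg hμpos.le (norm_nonneg (Pu w))]
  have hPsA : ∀ w : E, ‖Ps (A w)‖ ≤ ‖Ps w‖ := by
    intro w
    have h1 : ‖Ps (A w)‖ ^ 2 ≤ ‖Ps w‖ ^ 2 := by
      rw [hnorm Iuᶜ (A w), hnorm Iuᶜ w]
      apply Finset.sum_le_sum
      intro i hi
      rw [Finset.mem_compl] at hi
      rw [hcA i w]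
      have h2 := hsIu i hi
      nlinarith [sq_nonneg (c i w)]
    nlinarith [norm_nonneg (Ps (A w)), norm_nonneg (Ps w)]
  -- choose the radius r from continuity of the Hessian
  have hHcont : Continuous (fun z => fderiv ℝ (gradient f) z) :=
    (gradC1 hf).continuous_fderiv one_ne_zero
  have hcontat : ContinuousAt (fun z => fderiv ℝ (gradient f) z) p := hHcont.continuousAt
  rw [Metric.continuousAt_iff] at hcontat
  obtain ⟨d, hdpos, hd⟩ := hcontat (ε / α) (by positivity)
  set r : ℝ := d / 2 with hrdef
  have hrpos : 0 < r := by positivity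
  have hball : ∀ z ∈ Metric.closedBall p r,
      ‖fderiv ℝ (gradient f) z - fderiv ℝ (gradient f) p‖ ≤ ε / α := by
    intro z hz
    rw [Metric.mem_closedBall] at hz
    have : dist z p < d := by rw [hrdef] at hz; linarith
    have := hd this
    rw [dist_eq_norm] at this
    exact this.le
  refine ⟨hN, r, hrpos, ?_⟩
  set g : E → E := fun y => y - α • gradient f y with hg
  set T : Set E := {x : E | ∀ k, g^[k] x ∈ Metric.closedBall p r} with hT
  -- the key pairwise inequality on T
  have hpair : ∀ x ∈ T, ∀ y ∈ T, ‖Pu (x - y)‖ ≤ ‖Ps (x - y)‖ := by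
    intro x hx y hy
    by_contra hcon
    push_neg at hcon
    set w : ℕ → E := fun k => g^[k] x - g^[k] y with hw
    have hwball : ∀ k, ‖w k‖ ≤ 2 * r := by
      intro k
      have h1 : g^[k] x ∈ Metric.closedBall p r := hx k
      have h2 : g^[k] y ∈ Metric.closedBall p r := hy k
      rw [Metric.mem_closedBall] at h1 h2
      calc ‖w k‖ = dist (g^[k] x) (g^[k] y) := by rw [hw, dist_eq_norm]
        _ ≤ dist (g^[k] x) p + dist p (g^[k] y) := dist_triangle _ _ _
        _ ≤ 2 * r := by rw [dist_comm p]; linarith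
    have herr : ∀ k, ‖w (k + 1) - A (w k)‖ ≤ ε * ‖w k‖ := by
      intro k
      have h1 := g_linearization hf hα p hball (hx k) (hy k)
      have hiter : w (k+1) = g (g^[k] x) - g (g^[k] y) := by
        show g^[k+1] x - g^[k+1] y = g (g^[k] x) - g (g^[k] y)
        rw [Function.iterate_succ_apply' g k x, Function.iterate_succ_apply' g k y]
      have heq : g (g^[k] x) - g (g^[k] y) - A (w k)
          = (g^[k] x - α • gradient f (g^[k] x)) - (g^[k] y - α • gradient f (g^[k] y))
            - ((g^[k] x - g^[k] y) - α • Hp (g^[k] x - g^[k] y)) := rfl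
      rw [hiter, heq]
      exact h1
    have hind : ∀ k, ‖Ps (w k)‖ < ‖Pu (w k)‖ ∧ ρ ^ k * ‖Pu (w 0)‖ ≤ ‖Pu (w k)‖ := by
      intro k
      induction k with
      | zero => exact ⟨by simpa [hw] using hcon, by simp⟩
      | succ k ih =>
        obtain ⟨ih1, ih2⟩ := ih
        have hwk : ‖w k‖ ≤ ‖Pu (w k)‖ + ‖Ps (w k)‖ := by
          conv_lhs => rw [← hsplit (w k)]
          exact norm_add_le _ _
        have herrk : ‖w (k+1) - A (w k)‖ ≤ 2 * ε * ‖Pu (w k)‖ := by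
          calc ‖w (k+1) - A (w k)‖ ≤ ε * ‖w k‖ := herr k
            _ ≤ ε * (‖Pu (w k)‖ + ‖Ps (w k)‖) := by
                exact mul_le_mul_of_nonneg_left hwk hεpos.le
            _ ≤ 2 * ε * ‖Pu (w k)‖ := by
                have h8 := mul_le_mul_of_nonneg_left ih1.le hεpos.le
                nlinarith
        have hPusplit : Pu (w (k+1)) = Pu (A (w k)) + Pu (w (k+1) - A (w k)) := by
          rw [hPu_sub (w (k+1)) (A (w k)), add_sub_cancel]
        have hPssplit : Ps (w (k+1)) = Ps (A (w k)) + Ps (w (k+1) - A (w k)) := by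
          rw [hPs_sub (w (k+1)) (A (w k)), add_sub_cancel]
        have hPue : ‖Pu (w (k+1) - A (w k))‖ ≤ 2 * ε * ‖Pu (w k)‖ :=
          (hPu_le _).trans herrk
        have hPse : ‖Ps (w (k+1) - A (w k))‖ ≤ 2 * ε * ‖Pu (w k)‖ :=
          (hPs_le _).trans herrk
        have hlow : ρ * ‖Pu (w k)‖ ≤ ‖Pu (w (k+1))‖ := by
          have h1 : ‖Pu (A (w k))‖ - ‖Pu (w (k+1) - A (w k))‖ ≤ ‖Pu (w (k+1))‖ := by
            rw [hPusplit]
            have h9 := norm_add_le (Pu (A (w k)) + Pu (w (k+1) - A (w k)))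
              (-(Pu (w (k+1) - A (w k))))
            simp only [add_neg_cancel_right, norm_neg] at h9
            linarith
          have h2 := hPuA (w k)
          have h3 : μ - 2 * ε = ρ := by rw [hμdef, hεdef, hρdef]; ring
          have h4 : ρ * ‖Pu (w k)‖ = μ * ‖Pu (w k)‖ - 2 * ε * ‖Pu (w k)‖ := by
            rw [← h3]; ring
          linarith [hPue]
        have hup : ‖Ps (w (k+1))‖ < ρ * ‖Pu (w k)‖ := by
          have h1 : ‖Ps (w (k+1))‖ ≤ ‖Ps (A (w k))‖ + ‖Ps (w (k+1) - A (w k))‖ := by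
            rw [hPssplit]; exact norm_add_le _ _
          have h2 := hPsA (w k)
          have h3 : 1 + 2 * ε = ρ := by rw [hεdef, hρdef]; ring
          have h5 : ρ * ‖Pu (w k)‖ = ‖Pu (w k)‖ + 2 * ε * ‖Pu (w k)‖ := by
            rw [← h3]; ring
          linarith [hPse, ih1]
        have hPu0 : 0 ≤ ‖Pu (w 0)‖ := norm_nonneg _
        constructor
        · calc ‖Ps (w (k+1))‖ < ρ * ‖Pu (w k)‖ := hup
            _ ≤ ‖Pu (w (k+1))‖ := hlow
        · calc ρ ^ (k+1) * ‖Pu (w 0)‖ = ρ * (ρ ^ k * ‖Pu (w 0)‖) := by ring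
            _ ≤ ρ * ‖Pu (w k)‖ := by
                exact mul_le_mul_of_nonneg_left ih2 (by linarith)
            _ ≤ ‖Pu (w (k+1))‖ := hlow
    have hPu0pos : 0 < ‖Pu (w 0)‖ :=
      lt_of_le_of_lt (norm_nonneg (Ps (w 0))) (by simpa [hw] using hcon)
    obtain ⟨k, hk⟩ := pow_unbounded_of_one_lt ((2 * r) / ‖Pu (w 0)‖) hρ1
    have h1 := (hind k).2
    have h2 : ‖Pu (w k)‖ ≤ 2 * r := (hPu_le _).trans (hwball k)
    rw [div_lt_iff₀ hPu0pos] at hk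
    nlinarith
  -- from the pairwise inequality, T is (a subset of) a Lipschitz graph
  have hinc : T ⊆ (Function.invFunOn Ps T) '' (Ps '' T) := by
    intro x hx
    refine ⟨Ps x, ⟨x, hx, rfl⟩, ?_⟩
    set y := Function.invFunOn Ps T (Ps x) with hy
    have hyT : y ∈ T := Function.invFunOn_mem ⟨x, hx, rfl⟩
    have hyeq : Ps y = Ps x := Function.invFunOn_eq ⟨x, hx, rfl⟩
    have h1 : ‖Pu (y - x)‖ ≤ ‖Ps (y - x)‖ := hpair y hyT x hx
    have h2 : Ps (y - x) = 0 := by rw [hPs_sub, hyeq, sub_self]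
    rw [h2, norm_zero] at h1
    have h3 : Pu (y - x) = 0 := norm_le_zero_iff.mp h1
    have h4 : y - x = 0 := by
      have := hsplit (y - x)
      rw [h3, h2, add_zero] at this
      exact this.symm
    have : y = x := by rwa [sub_eq_zero] at h4
    rw [this]
  have hlip : LipschitzOnWith 2 (Function.invFunOn Ps T) (Ps '' T) := by
    apply LipschitzOnWith.of_dist_le_mul
    intro y1 hy1 y2 hy2
    set x1 := Function.invFunOn Ps T y1 with hx1
    set x2 := Function.invFunOn Ps T y2 with hx2
    have hx1T : x1 ∈ T := Function.invFunOn_mem hy1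
    have hx2T : x2 ∈ T := Function.invFunOn_mem hy2
    have hx1eq : Ps x1 = y1 := Function.invFunOn_eq hy1
    have hx2eq : Ps x2 = y2 := Function.invFunOn_eq hy2
    have h1 : ‖Pu (x1 - x2)‖ ≤ ‖Ps (x1 - x2)‖ := hpair x1 hx1T x2 hx2T
    have h2 : Ps (x1 - x2) = y1 - y2 := by rw [hPs_sub, hx1eq, hx2eq]
    rw [dist_eq_norm, dist_eq_norm]
    calc ‖x1 - x2‖ ≤ ‖Pu (x1 - x2)‖ + ‖Ps (x1 - x2)‖ := by
          conv_lhs => rw [← hsplit (x1 - x2)]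
          exact norm_add_le _ _
      _ ≤ 2 * ‖y1 - y2‖ := by rw [h2] at h1 ⊢; nlinarith
  -- the image of Ps lies in a lower-dimensional subspace
  set V : Submodule ℝ E := Submodule.span ℝ (↑(Iuᶜ.image b)) with hV
  have hPsV : ∀ w : E, Ps w ∈ V := by
    intro w
    apply Submodule.sum_mem
    intro i hi
    exact Submodule.smul_mem _ _ (Submodule.subset_span
      (by simp only [Finset.coe_image, Set.mem_image, Finset.mem_coe]; exact ⟨i, hi, rfl⟩))
  have hVrank : Module.finrank ℝ V ≤ N - 1 := by
    calc Module.finrank ℝ V ≤ (Iuᶜ.image b).card := finrank_span_finset_le_card _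
      _ ≤ Iuᶜ.card := Finset.card_image_le
      _ = N - Iu.card := by rw [Finset.card_compl]; simp
      _ ≤ N - 1 := Nat.sub_le_sub_left (Finset.one_le_card.mpr hIu) N
  -- put the dimension bounds together
  calc dimH T ≤ dimH ((Function.invFunOn Ps T) '' (Ps '' T)) := dimH_mono hinc
    _ ≤ dimH (Ps '' T) := hlip.dimH_image_le
    _ ≤ dimH (V : Set E) := dimH_mono (by rintro _ ⟨w, _, rfl⟩; exact hPsV w)
    _ ≤ ((N - 1 : ℕ) : ℝ≥0∞) := by
        have h1 : dimH (V : Set E) ≤ dimH (Set.univ : Set V) := by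
          have h2 : (V : Set E) = Set.range (V.subtypeₗᵢ) := by
            rw [← Set.image_univ]
            ext z
            simp [Submodule.subtypeₗᵢ]
            exact ⟨fun h => ⟨z, h, rfl⟩, by rintro ⟨a, ha, rfl⟩; exact ha⟩
          rw [h2, ← Set.image_univ]
          exact (V.subtypeₗᵢ.isometry.lipschitz).dimH_image_le _
        have h3 : dimH (Set.univ : Set V) = Module.finrank ℝ V := Real.dimH_univ_eq_finrank V
        rw [h3] at h1
        exact h1.trans (by exact_mod_cast Nat.cast_le.mpr hVrank)

end GradientDescentSaddle

/-- Main theorem, non-isolated critical points: for `f : ℝ^N → ℝ`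
twice continuously differentiable with globally bounded Hessian `‖∇²f(x)‖ ≤ L`
and step size `0 < α < 1/L`, the set of initial conditions from which gradient
descent converges to a strict saddle point (a critical point where the Hessian
has a strictly negative eigenvalue, equivalently the associated quadratic form
takes a negative value) has Lebesgue measure zero. No isolatedness of critical
points is assumed. -/
theorem gradient_descent_avoids_strict_saddles
    {N : ℕ} (f : EuclideanSpace ℝ (Fin N) → ℝ) (hf : ContDiff ℝ 2 f)
    (L : ℝ) (hL : ∀ x, ‖fderiv ℝ (gradient f) x‖ ≤ L)
    (α : ℝ) (hα : 0 < α) (hαL : α < 1 / L) :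
    volume {x : EuclideanSpace ℝ (Fin N) |
      ∃ p, (gradient f p = 0 ∧
            ∃ v : EuclideanSpace ℝ (Fin N),
              (inner ℝ (fderiv ℝ (gradient f) p v) v : ℝ) < 0) ∧
        Tendsto (fun k => (fun y => y - α • gradient f y)^[k] x) atTop (𝓝 p)} = 0 := by
  classical
  set g : EuclideanSpace ℝ (Fin N) → EuclideanSpace ℝ (Fin N) := fun y => y - α • gradient f y with hg
  set A : Set (EuclideanSpace ℝ (Fin N)) := {x : EuclideanSpace ℝ (Fin N) |
      ∃ p, (gradient f p = 0 ∧
            ∃ v : EuclideanSpace ℝ (Fin N), (inner ℝ (fderiv ℝ (gradient f) p v) v : ℝ) < 0) ∧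
        Tendsto (fun k => g^[k] x) atTop (𝓝 p)} with hA
  show volume A = 0
  -- basic constants
  have hL0 : 0 < L := by
    by_contra hneg
    push_neg at hneg
    have : 1 / L ≤ 0 := one_div_nonpos.mpr hneg
    linarith
  have hαL' : α * L < 1 := (lt_div_iff₀ hL0).mp hαL
  rcases A.eq_empty_or_nonempty with hAe | hAne
  · rw [hAe]; exact measure_empty
  -- the saddle set
  set SP : Set (EuclideanSpace ℝ (Fin N)) := {p : EuclideanSpace ℝ (Fin N) | ∃ v : EuclideanSpace ℝ (Fin N), (inner ℝ (fderiv ℝ (gradient f) p v) v : ℝ) < 0} with hSP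
  have hloc : ∀ p : SP, ∃ r > 0, dimH {x : EuclideanSpace ℝ (Fin N) | ∀ k,
      g^[k] x ∈ Metric.closedBall (p : EuclideanSpace ℝ (Fin N)) r} ≤ ((N - 1 : ℕ) : ℝ≥0∞) :=
    fun p => (local_saddle_dimH hf hL hα hαL' p p.2).2
  have hN : 1 ≤ N := by
    obtain ⟨x, p, ⟨_, hsad⟩, _⟩ := hAne
    exact (local_saddle_dimH hf hL hα hαL' p hsad).1
  choose r hrpos hdim using hloc
  -- countable subcover of the saddle set by half-radius balls
  obtain ⟨C, hCcount, hCcover⟩ := TopologicalSpace.isOpen_iUnion_countable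
    (fun q : SP => Metric.ball (q : EuclideanSpace ℝ (Fin N)) (r q / 2)) (fun q => Metric.isOpen_ball)
  -- the global stable set is included in countably many preimages
  set T : SP → Set (EuclideanSpace ℝ (Fin N)) := fun q => {x : EuclideanSpace ℝ (Fin N) | ∀ k, g^[k] x ∈ Metric.closedBall (q : EuclideanSpace ℝ (Fin N)) (r q)}
    with hT
  have hinc : A ⊆ ⋃ q ∈ C, ⋃ K : ℕ, (g^[K]) ⁻¹' (T q) := by
    rintro x ⟨p, ⟨hcrit, hsad⟩, htend⟩
    have hpSP : p ∈ SP := hsad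
    have hpmem : p ∈ ⋃ q : SP, Metric.ball (q : EuclideanSpace ℝ (Fin N)) (r q / 2) := by
      refine Set.mem_iUnion.mpr ⟨⟨p, hpSP⟩, ?_⟩
      simpa using half_pos (hrpos ⟨p, hpSP⟩)
    rw [← hCcover] at hpmem
    rw [Set.mem_iUnion₂] at hpmem
    obtain ⟨q, hqC, hpq⟩ := hpmem
    rw [Metric.mem_ball] at hpq
    have hev : ∀ᶠ k in atTop, g^[k] x ∈ Metric.ball p (r q / 2) :=
      htend.eventually (Metric.ball_mem_nhds p (half_pos (hrpos q)))
    rw [eventually_atTop] at hev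
    obtain ⟨K, hK⟩ := hev
    refine Set.mem_iUnion₂.mpr ⟨q, hqC, Set.mem_iUnion.mpr ⟨K, ?_⟩⟩
    rw [Set.mem_preimage]
    intro k
    rw [← Function.iterate_add_apply g k K x]
    have h1 := hK (k + K) (Nat.le_add_left K k)
    rw [Metric.mem_ball] at h1
    rw [Metric.mem_closedBall]
    calc dist (g^[k + K] x) (q : EuclideanSpace ℝ (Fin N)) ≤ dist (g^[k + K] x) p + dist p (q : EuclideanSpace ℝ (Fin N)) :=
          dist_triangle _ _ _
      _ ≤ r q := by linarith
  -- dimension bound for the countable union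
  have hdimU : dimH (⋃ q ∈ C, ⋃ K : ℕ, (g^[K]) ⁻¹' (T q)) ≤ ((N - 1 : ℕ) : ℝ≥0∞) := by
    rw [dimH_bUnion hCcount]
    refine iSup₂_le fun q hq => ?_
    rw [dimH_iUnion]
    refine iSup_le fun K => ?_
    have hanti : AntilipschitzWith (((1 - α * L)⁻¹.toNNReal) ^ K) (g^[K]) := by
      induction K with
      | zero => simpa using AntilipschitzWith.id
      | succ K ih =>
        rw [Function.iterate_succ' g K, pow_succ]
        exact (g_antilip hf hL hα hαL').comp ih
    exact (hanti.dimH_preimage_le (T q)).trans (hdim q)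
  -- conclude
  refine measure_mono_null hinc (volume_zero_of_dimH_lt ?_)
  refine lt_of_le_of_lt hdimU ?_
  have : ((N - 1 : ℕ) : ℝ≥0∞) < (N : ℕ) := by
    rw [Nat.cast_lt]
    omega
  exact_mod_cast this
end

section
/- Let S ⊆ ℝ^N be an open convex set, f : S → ℝ twice continuously differentiable with sup_{x ∈ S} ‖∇²f(x)‖₂ ≤ L < ∞, let 0 < α < 1/L, and assume g(S) ⊆ S where g(x) = x − α∇f(x). Then the set of initial conditions x ∈ S for which the gradient descent iterates g^k(x) converge to a strict saddle point of f has Lebesgue measure zero. -/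
open MeasureTheory Filter Topology

open scoped NNReal ENNReal
open Set Metric

private lemma gd_vol_zero {N : ℕ} (A : Set (EuclideanSpace ℝ (Fin N)))
    (h : μH[(N : ℝ)] A = 0) : volume A = 0 := by
  classical
  set e := (MeasurableEquiv.toLp 2 (Fin N → ℝ)).symm with he
  have hlip : LipschitzWith 1 (⇑e) := by
    exact PiLp.lipschitzWith_ofLp 2 (fun _ : Fin N => ℝ)
  have h1 : μH[(N : ℝ)] (⇑e '' A) = 0 := by
    have := hlip.hausdorffMeasure_image_le (by positivity : (0:ℝ) ≤ (N:ℝ)) A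
    simp only [h, mul_zero, ENNReal.coe_one, ENNReal.one_rpow] at this
    exact le_antisymm (by simpa using this) zero_le
  have h2 : volume (⇑e '' A) = 0 := by
    have hv : (μH[(N : ℝ)] : Measure (Fin N → ℝ)) = volume := by
      simpa [Fintype.card_fin] using (hausdorffMeasure_pi_real (ι := Fin N))
    rw [← hv]; exact h1
  have hmp := EuclideanSpace.volume_preserving_symm_measurableEquiv_toLp (Fin N)
  have hMvol : volume (toMeasurable volume (⇑e '' A)) = 0 := by
    rw [measure_toMeasurable]; exact h2
  have hsub : A ⊆ ⇑e ⁻¹' (toMeasurable volume (⇑e '' A)) :=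
    fun x hx => subset_toMeasurable _ _ (mem_image_of_mem _ hx)
  refine measure_mono_null hsub ?_
  rw [hmp.measure_preimage (measurableSet_toMeasurable _ _).nullMeasurableSet]
  exact hMvol

private lemma gd_submodule_zero {N : ℕ} (E' : Submodule ℝ (EuclideanSpace ℝ (Fin N)))
    (h : E' ≠ ⊤) : μH[(N : ℝ)] (E' : Set (EuclideanSpace ℝ (Fin N))) = 0 := by
  have hrank : Module.finrank ℝ E' < N := by
    have := Submodule.finrank_lt (K := ℝ) (V := EuclideanSpace ℝ (Fin N)) h
    simpa [finrank_euclideanSpace_fin] using this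
  have hdim : dimH (E' : Set (EuclideanSpace ℝ (Fin N))) ≤ Module.finrank ℝ E' := by
    have h1 : (E' : Set (EuclideanSpace ℝ (Fin N))) = Subtype.val '' (univ : Set E') := by
      simp
    rw [h1]
    refine le_trans ((isometry_subtype_coe).lipschitz.dimH_image_le _) ?_
    rw [Real.dimH_univ_eq_finrank]
  have hlt : dimH (E' : Set (EuclideanSpace ℝ (Fin N))) < ((N : ℝ≥0) : ℝ≥0∞) := by
    refine lt_of_le_of_lt hdim ?_
    norm_cast
  have := hausdorffMeasure_of_dimH_lt hlt
  simpa using this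

private def gdD {N : ℕ} (a : Fin N → ℝ) (d : EuclideanSpace ℝ (Fin N)) :
    EuclideanSpace ℝ (Fin N) := WithLp.toLp 2 (fun i => a i * d i)

set_option maxHeartbeats 1600000 in
private lemma gd_graph_null {N : ℕ}
    (g : EuclideanSpace ℝ (Fin N) → EuclideanSpace ℝ (Fin N))
    (p : EuclideanSpace ℝ (Fin N)) (r : ℝ) (a : Fin N → ℝ) (Iu : Finset (Fin N))
    (su ss ε : ℝ) (hss : 0 ≤ ss) (hε : 0 ≤ ε)
    (hc : 1 < su - Real.sqrt 2 * ε) (hgap : ss + Real.sqrt 2 * ε ≤ su - Real.sqrt 2 * ε)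
    (hu : ∀ i ∈ Iu, su ≤ a i) (hsb : ∀ i ∉ Iu, |a i| ≤ ss) (hIu : Iu.Nonempty)
    (herr : ∀ x ∈ Metric.closedBall p r, ∀ y ∈ Metric.closedBall p r,
      ‖(g x - g y) - gdD a (x - y)‖ ≤ ε * ‖x - y‖) :
    μH[(N : ℝ)] {x | ∀ k, g^[k] x ∈ Metric.closedBall p r} = 0 := by
  classical
  set K : Set (EuclideanSpace ℝ (Fin N)) := {x | ∀ k, g^[k] x ∈ Metric.closedBall p r} with hK
  set Is : Finset (Fin N) := Finset.univ.filter (fun i => i ∉ Iu) with hIs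
  -- basic constants
  have hsqrt2 : (0:ℝ) < Real.sqrt 2 := by positivity
  set c : ℝ := su - Real.sqrt 2 * ε with hcdef
  have hc0 : 0 < c := lt_trans one_pos hc
  have hsu1 : 1 < su := by nlinarith [mul_nonneg hsqrt2.le hε]
  have hsu0 : 0 < su := lt_trans one_pos hsu1
  -- projections
  set Pu : EuclideanSpace ℝ (Fin N) → EuclideanSpace ℝ (Fin N) := fun d => WithLp.toLp 2 (fun i => if i ∈ Iu then d i else 0 : Fin N → ℝ) with hPu
  set Ps : EuclideanSpace ℝ (Fin N) → EuclideanSpace ℝ (Fin N) := fun d => WithLp.toLp 2 (fun i => if i ∈ Iu then 0 else d i : Fin N → ℝ) with hPs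
  have happly : ∀ (u v : EuclideanSpace ℝ (Fin N)) (i : Fin N), (u - v) i = u i - v i := fun u v i => rfl
  have hnorm : ∀ d : EuclideanSpace ℝ (Fin N), ‖d‖ = Real.sqrt (∑ i, d i ^ 2) := by
    intro d
    rw [EuclideanSpace.norm_eq]
    congr 1
    exact Finset.sum_congr rfl fun i _ => by rw [Real.norm_eq_abs, sq_abs]
  have hPu_norm : ∀ d : EuclideanSpace ℝ (Fin N), ‖Pu d‖ = Real.sqrt (∑ i ∈ Iu, d i ^ 2) := by
    intro d
    rw [hnorm]
    congr 1
    rw [← Finset.sum_filter_add_sum_filter_not Finset.univ (fun i => i ∈ Iu)]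
    have h2 : ∑ i ∈ Finset.univ.filter (fun i => i ∉ Iu), (Pu d) i ^ 2 = 0 :=
      Finset.sum_eq_zero fun i hi => by
        simp only [Finset.mem_filter] at hi; simp [hPu, hi.2]
    rw [h2, add_zero, Finset.filter_mem_eq_inter, Finset.univ_inter]
    exact Finset.sum_congr rfl fun i hi => by simp [hPu, hi]
  have hPs_norm : ∀ d : EuclideanSpace ℝ (Fin N), ‖Ps d‖ = Real.sqrt (∑ i ∈ Is, d i ^ 2) := by
    intro d
    rw [hnorm]
    congr 1
    rw [← Finset.sum_filter_add_sum_filter_not Finset.univ (fun i => i ∈ Iu)]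
    have h2 : ∑ i ∈ Finset.univ.filter (fun i => i ∈ Iu), (Ps d) i ^ 2 = 0 :=
      Finset.sum_eq_zero fun i hi => by
        simp only [Finset.mem_filter] at hi; simp [hPs, hi.2]
    rw [h2, zero_add]
    exact Finset.sum_congr rfl fun i hi => by
      simp only [hIs, Finset.mem_filter] at hi; simp [hPs, hi.2]
  have hsum_split : ∀ d : EuclideanSpace ℝ (Fin N), (∑ i, d i ^ 2) = (∑ i ∈ Iu, d i ^ 2) + ∑ i ∈ Is, d i ^ 2 := by
    intro d
    rw [← Finset.sum_filter_add_sum_filter_not Finset.univ (fun i => i ∈ Iu),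
      Finset.filter_mem_eq_inter, Finset.univ_inter]
  have hpyth : ∀ d : EuclideanSpace ℝ (Fin N), ‖d‖ ^ 2 = ‖Pu d‖ ^ 2 + ‖Ps d‖ ^ 2 := by
    intro d
    rw [hnorm, hPu_norm, hPs_norm, Real.sq_sqrt (by positivity), Real.sq_sqrt (by positivity),
      Real.sq_sqrt (by positivity), hsum_split]
  have hPu_le : ∀ d : EuclideanSpace ℝ (Fin N), ‖Pu d‖ ≤ ‖d‖ := by
    intro d
    rw [hPu_norm, hnorm]
    exact Real.sqrt_le_sqrt (by
      rw [hsum_split d]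
      exact le_add_of_nonneg_right (Finset.sum_nonneg fun i _ => sq_nonneg _))
  have hPs_le : ∀ d : EuclideanSpace ℝ (Fin N), ‖Ps d‖ ≤ ‖d‖ := by
    intro d
    rw [hPs_norm, hnorm]
    exact Real.sqrt_le_sqrt (by
      rw [hsum_split d]
      exact le_add_of_nonneg_left (Finset.sum_nonneg fun i _ => sq_nonneg _))
  have hPu_add : ∀ u v : EuclideanSpace ℝ (Fin N), Pu (u + v) = Pu u + Pu v := by
    intro u v
    ext i
    show (if i ∈ Iu then (u + v) i else 0) = (if i ∈ Iu then u i else 0) + (if i ∈ Iu then v i else 0)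
    by_cases h : i ∈ Iu <;> simp [h]
  have hPs_add : ∀ u v : EuclideanSpace ℝ (Fin N), Ps (u + v) = Ps u + Ps v := by
    intro u v
    ext i
    show (if i ∈ Iu then 0 else (u + v) i) = (if i ∈ Iu then 0 else u i) + (if i ∈ Iu then 0 else v i)
    by_cases h : i ∈ Iu <;> simp [h]
  -- expansion estimate
  have hPuD : ∀ d : EuclideanSpace ℝ (Fin N), su * ‖Pu d‖ ≤ ‖Pu (gdD a d)‖ := by
    intro d
    rw [hPu_norm, hPu_norm]
    have : su * Real.sqrt (∑ i ∈ Iu, d i ^ 2) =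
        Real.sqrt (∑ i ∈ Iu, su ^ 2 * d i ^ 2) := by
      rw [← Finset.mul_sum, Real.sqrt_mul (by positivity), Real.sqrt_sq hsu0.le]
    rw [this]
    apply Real.sqrt_le_sqrt
    apply Finset.sum_le_sum
    intro i hi
    have h1 : su ≤ a i := hu i hi
    have : (gdD a d) i = a i * d i := rfl
    rw [this, mul_pow]
    apply mul_le_mul_of_nonneg_right _ (sq_nonneg _)
    exact pow_le_pow_left₀ hsu0.le h1 2
  have hPsD : ∀ d : EuclideanSpace ℝ (Fin N), ‖Ps (gdD a d)‖ ≤ ss * ‖Ps d‖ := by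
    intro d
    rw [hPs_norm, hPs_norm]
    have : ss * Real.sqrt (∑ i ∈ Is, d i ^ 2) =
        Real.sqrt (∑ i ∈ Is, ss ^ 2 * d i ^ 2) := by
      rw [← Finset.mul_sum, Real.sqrt_mul (by positivity), Real.sqrt_sq hss]
    rw [this]
    apply Real.sqrt_le_sqrt
    apply Finset.sum_le_sum
    intro i hi
    have hi' : i ∉ Iu := by simpa [hIs] using (Finset.mem_filter.1 hi).2
    have h1 : |a i| ≤ ss := hsb i hi'
    have : (gdD a d) i = a i * d i := rfl
    rw [this, mul_pow]
    apply mul_le_mul_of_nonneg_right _ (sq_nonneg _)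
    calc a i ^ 2 = |a i| ^ 2 := (sq_abs _).symm
      _ ≤ ss ^ 2 := pow_le_pow_left₀ (abs_nonneg _) h1 2
  have hcone_bound : ∀ d : EuclideanSpace ℝ (Fin N), ‖Ps d‖ ≤ ‖Pu d‖ → ‖d‖ ≤ Real.sqrt 2 * ‖Pu d‖ := by
    intro d hd
    have h1 : ‖d‖ ^ 2 ≤ 2 * ‖Pu d‖ ^ 2 := by
      rw [hpyth d]
      nlinarith [norm_nonneg (Ps d), norm_nonneg (Pu d)]
    calc ‖d‖ = Real.sqrt (‖d‖ ^ 2) := (Real.sqrt_sq (norm_nonneg _)).symm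
      _ ≤ Real.sqrt (2 * ‖Pu d‖ ^ 2) := Real.sqrt_le_sqrt h1
      _ = Real.sqrt 2 * ‖Pu d‖ := by
          rw [Real.sqrt_mul (by norm_num), Real.sqrt_sq (norm_nonneg _)]
  have hPu_sub : ∀ u v : EuclideanSpace ℝ (Fin N), Pu (u - v) = Pu u - Pu v := by
    intro u v
    ext i
    show (if i ∈ Iu then (u - v) i else 0) =
      (if i ∈ Iu then u i else 0) - (if i ∈ Iu then v i else 0)
    by_cases h : i ∈ Iu <;> simp [h] <;> exact happly u v i
  have hPs_sub : ∀ u v : EuclideanSpace ℝ (Fin N), Ps (u - v) = Ps u - Ps v := by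
    intro u v
    ext i
    show (if i ∈ Iu then 0 else (u - v) i) =
      (if i ∈ Iu then 0 else u i) - (if i ∈ Iu then 0 else v i)
    by_cases h : i ∈ Iu <;> simp [h] <;> exact happly u v i
  have hcone_bound' : ∀ d : EuclideanSpace ℝ (Fin N), ‖Pu d‖ ≤ ‖Ps d‖ → ‖d‖ ≤ Real.sqrt 2 * ‖Ps d‖ := by
    intro d hd
    have h1 : ‖d‖ ^ 2 ≤ 2 * ‖Ps d‖ ^ 2 := by
      rw [hpyth d]
      nlinarith [norm_nonneg (Ps d), norm_nonneg (Pu d)]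
    calc ‖d‖ = Real.sqrt (‖d‖ ^ 2) := (Real.sqrt_sq (norm_nonneg _)).symm
      _ ≤ Real.sqrt (2 * ‖Ps d‖ ^ 2) := Real.sqrt_le_sqrt h1
      _ = Real.sqrt 2 * ‖Ps d‖ := by
          rw [Real.sqrt_mul (by norm_num), Real.sqrt_sq (norm_nonneg _)]
  -- the key separation property
  have hsep : ∀ x ∈ K, ∀ y ∈ K, ‖x - y‖ ≤ Real.sqrt 2 * ‖Ps x - Ps y‖ := by
    intro x hx y hy
    rw [← hPs_sub]
    by_cases hcone : ‖Ps (x - y)‖ ≤ ‖Pu (x - y)‖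
    · -- cone case : iterates expand, force x = y
      have hiter : ∀ k, ‖Ps (g^[k] x - g^[k] y)‖ ≤ ‖Pu (g^[k] x - g^[k] y)‖ ∧
          c ^ k * ‖Pu (x - y)‖ ≤ ‖Pu (g^[k] x - g^[k] y)‖ := by
        intro k
        induction k with
        | zero => simpa using hcone
        | succ k ih =>
          have hxk : g^[k] x ∈ Metric.closedBall p r := hx k
          have hyk : g^[k] y ∈ Metric.closedBall p r := hy k
          set xk := g^[k] x with hxkd
          set yk := g^[k] y with hykd
          have hiterx : g^[k+1] x = g xk := Function.iterate_succ_apply' g k x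
          have hitery : g^[k+1] y = g yk := Function.iterate_succ_apply' g k y
          set d : EuclideanSpace ℝ (Fin N) := xk - yk with hd
          set d' : EuclideanSpace ℝ (Fin N) := g xk - g yk with hd'
          have he : ‖d' - gdD a d‖ ≤ ε * ‖d‖ := herr xk hxk yk hyk
          have hdb : ‖d‖ ≤ Real.sqrt 2 * ‖Pu d‖ := hcone_bound d ih.1
          have heb : ‖d' - gdD a d‖ ≤ (Real.sqrt 2 * ε) * ‖Pu d‖ := by
            calc ‖d' - gdD a d‖ ≤ ε * ‖d‖ := he
              _ ≤ ε * (Real.sqrt 2 * ‖Pu d‖) := mul_le_mul_of_nonneg_left hdb hε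
              _ = (Real.sqrt 2 * ε) * ‖Pu d‖ := by ring
          have hPuerr : ‖Pu (d' - gdD a d)‖ ≤ (Real.sqrt 2 * ε) * ‖Pu d‖ :=
            (hPu_le _).trans heb
          have hPserr : ‖Ps (d' - gdD a d)‖ ≤ (Real.sqrt 2 * ε) * ‖Pu d‖ :=
            (hPs_le _).trans heb
          have hPu_lower : c * ‖Pu d‖ ≤ ‖Pu d'‖ := by
            have h1 : Pu (gdD a d) = Pu d' - Pu (d' - gdD a d) := by
              rw [← hPu_sub, sub_sub_cancel d' (gdD a d)]
            have h2 : ‖Pu (gdD a d)‖ ≤ ‖Pu d'‖ + ‖Pu (d' - gdD a d)‖ := by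
              rw [h1]; exact norm_sub_le _ _
            have h3 := hPuD d
            have : c * ‖Pu d‖ = su * ‖Pu d‖ - (Real.sqrt 2 * ε) * ‖Pu d‖ := by
              rw [hcdef]; ring
            linarith
          have hPs_upper : ‖Ps d'‖ ≤ c * ‖Pu d‖ := by
            have h1 : Ps d' = Ps (gdD a d) + Ps (d' - gdD a d) := by
              rw [← hPs_add, add_comm, sub_add_cancel d' (gdD a d)]
            have h2 : ‖Ps d'‖ ≤ ‖Ps (gdD a d)‖ + ‖Ps (d' - gdD a d)‖ := by
              rw [h1]; exact norm_add_le _ _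
            have h3 := hPsD d
            have h4 : ss * ‖Ps d‖ ≤ ss * ‖Pu d‖ := mul_le_mul_of_nonneg_left ih.1 hss
            have h5 : (ss + Real.sqrt 2 * ε) * ‖Pu d‖ ≤ c * ‖Pu d‖ :=
              mul_le_mul_of_nonneg_right hgap (norm_nonneg _)
            nlinarith
          constructor
          · rw [hiterx, hitery, ← hd']
            exact hPs_upper.trans hPu_lower
          · rw [hiterx, hitery, ← hd', pow_succ]
            calc c ^ k * c * ‖Pu (x - y)‖ = c * (c ^ k * ‖Pu (x - y)‖) := by ring
              _ ≤ c * ‖Pu d‖ := mul_le_mul_of_nonneg_left ih.2 hc0.le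
              _ ≤ ‖Pu d'‖ := hPu_lower
      have hbound : ∀ k, c ^ k * ‖Pu (x - y)‖ ≤ 2 * r := by
        intro k
        refine ((hiter k).2.trans ((hPu_le _).trans ?_))
        have h1 : dist (g^[k] x) p ≤ r := hx k
        have h2 : dist (g^[k] y) p ≤ r := hy k
        calc ‖g^[k] x - g^[k] y‖ = dist (g^[k] x) (g^[k] y) := (dist_eq_norm _ _).symm
          _ ≤ dist (g^[k] x) p + dist p (g^[k] y) := dist_triangle _ _ _
          _ = dist (g^[k] x) p + dist (g^[k] y) p := by rw [dist_comm p]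
          _ ≤ 2 * r := by linarith
      have hPu0 : ‖Pu (x - y)‖ = 0 := by
        by_contra h
        have hpos : 0 < ‖Pu (x - y)‖ := lt_of_le_of_ne (norm_nonneg _) (Ne.symm h)
        obtain ⟨k, hk⟩ := pow_unbounded_of_one_lt ((2 * r) / ‖Pu (x - y)‖) hc
        have : 2 * r < c ^ k * ‖Pu (x - y)‖ := by
          rw [div_lt_iff₀ hpos] at hk
          linarith
        exact absurd (hbound k) (not_le.2 this)
      have hPs0 : ‖Ps (x - y)‖ = 0 := le_antisymm (by rw [← hPu0]; exact hcone) (norm_nonneg _)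
      exact hcone_bound' _ (by rw [hPu0, hPs0])
    · exact hcone_bound' _ (not_le.1 hcone).le
  -- K is contained in a Lipschitz image of a proper subspace
  set T : Set (EuclideanSpace ℝ (Fin N)) := Ps '' K with hT
  set F : EuclideanSpace ℝ (Fin N) → EuclideanSpace ℝ (Fin N) := Function.invFunOn Ps K with hF
  have hFprop : ∀ z ∈ T, F z ∈ K ∧ Ps (F z) = z := by
    intro z hz
    obtain ⟨w, hw, hwz⟩ := hz
    exact ⟨Function.invFunOn_mem ⟨w, hw, hwz⟩, Function.invFunOn_eq ⟨w, hw, hwz⟩⟩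
  have hlipF : LipschitzOnWith (Real.sqrt 2).toNNReal F T := by
    apply LipschitzOnWith.of_dist_le_mul
    intro z hz w hw
    rw [Real.coe_toNNReal _ hsqrt2.le, dist_eq_norm, dist_eq_norm]
    calc ‖F z - F w‖ ≤ Real.sqrt 2 * ‖Ps (F z) - Ps (F w)‖ :=
          hsep _ (hFprop z hz).1 _ (hFprop w hw).1
      _ = Real.sqrt 2 * ‖z - w‖ := by rw [(hFprop z hz).2, (hFprop w hw).2]
  have hKT : K ⊆ F '' T := by
    intro x hx
    have hz : Ps x ∈ T := Set.mem_image_of_mem _ hx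
    refine ⟨Ps x, hz, ?_⟩
    have h1 := hsep x hx (F (Ps x)) (hFprop _ hz).1
    rw [(hFprop _ hz).2] at h1
    simp only [sub_self, norm_zero, mul_zero] at h1
    have h2 : x - F (Ps x) = 0 := by
      rw [← norm_le_zero_iff]
      exact h1
    have h3 : x = F (Ps x) := by
      have := sub_eq_zero.1 h2
      exact this
    exact h3.symm
  -- the proper subspace
  set Es : Submodule ℝ (EuclideanSpace ℝ (Fin N)) :=
    { carrier := {x : EuclideanSpace ℝ (Fin N) | ∀ i ∈ Iu, x i = 0}
      add_mem' := by
        intro u v hu' hv' i hi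
        have : (u + v) i = u i + v i := rfl
        rw [this, hu' i hi, hv' i hi, add_zero]
      zero_mem' := fun i _ => rfl
      smul_mem' := by
        intro t u hu' i hi
        have : (t • u) i = t * u i := rfl
        rw [this, hu' i hi, mul_zero] } with hEsd
  have hTEs : T ⊆ (Es : Set (EuclideanSpace ℝ (Fin N))) := by
    rintro _ ⟨w, hw, rfl⟩ i hi
    show (if i ∈ Iu then 0 else w i) = 0
    simp [hi]
  have hEs : Es ≠ ⊤ := by
    obtain ⟨i₀, hi₀⟩ := hIu
    intro htop
    have hmem : (EuclideanSpace.single i₀ (1:ℝ)) ∈ Es := htop ▸ Submodule.mem_top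
    have := hmem i₀ hi₀
    rw [EuclideanSpace.single_apply] at this
    simp at this
  have hEs0 : μH[(N : ℝ)] (Es : Set (EuclideanSpace ℝ (Fin N))) = 0 := gd_submodule_zero Es hEs
  have hT0 : μH[(N : ℝ)] T = 0 := measure_mono_null hTEs hEs0
  have himg : μH[(N : ℝ)] (F '' T) = 0 := by
    have h1 := hlipF.hausdorffMeasure_image_le (d := (N : ℝ)) (Nat.cast_nonneg N)
    rw [hT0, mul_zero] at h1
    exact le_antisymm h1 zero_le
  exact measure_mono_null hKT himg

open scoped RealInnerProductSpace in
set_option maxHeartbeats 1600000 in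
/-- Forward-invariant version: `S ⊆ ℝ^N` open convex, `f` twice
continuously differentiable on `S` with `‖∇²f‖ ≤ L` on `S`, step size
`0 < α < 1/L`, and the gradient descent map `g x = x - α • ∇f x` satisfies
`g(S) ⊆ S`. Then the set of initial conditions in `S` from which the gradient
descent iterates converge to a strict saddle point (a critical point whose
Hessian has a strictly negative eigenvalue, equivalently the quadratic form
takes a negative value) has Lebesgue measure zero. -/
theorem gradient_descent_avoids_strict_saddles_forward_invariant
    {N : ℕ} (S : Set (EuclideanSpace ℝ (Fin N))) (hS : IsOpen S) (hconv : Convex ℝ S)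
    (f : EuclideanSpace ℝ (Fin N) → ℝ) (hf : ContDiffOn ℝ 2 f S)
    (L : ℝ) (hL : ∀ x ∈ S, ‖fderiv ℝ (gradient f) x‖ ≤ L)
    (α : ℝ) (hα : 0 < α) (hαL : α < 1 / L)
    (g : EuclideanSpace ℝ (Fin N) → EuclideanSpace ℝ (Fin N))
    (hg : ∀ x, g x = x - α • gradient f x)
    (hinv : Set.MapsTo g S S) :
    volume {x ∈ S | ∃ p ∈ S, (gradient f p = 0 ∧
        ∃ v : EuclideanSpace ℝ (Fin N),
          (inner ℝ (fderiv ℝ (gradient f) p v) v : ℝ) < 0) ∧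
      Tendsto (fun k => g^[k] x) atTop (𝓝 p)} = 0 := by
  classical
  rcases Set.eq_empty_or_nonempty {x ∈ S | ∃ p ∈ S, (gradient f p = 0 ∧
      ∃ v : EuclideanSpace ℝ (Fin N),
        (inner ℝ (fderiv ℝ (gradient f) p v) v : ℝ) < 0) ∧
      Tendsto (fun k => g^[k] x) atTop (𝓝 p)} with hW | hW
  · rw [hW]; simp
  -- L is positive
  have hLpos : 0 < L := by
    obtain ⟨x₀, _, p₀, hp₀S, ⟨_, v₀, hv₀⟩, _⟩ := hW
    have hH₀ : fderiv ℝ (gradient f) p₀ ≠ 0 := by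
      intro h
      rw [h] at hv₀
      simp at hv₀
    exact lt_of_lt_of_le (norm_pos_iff.2 hH₀) (hL p₀ hp₀S)
  have hαL1 : α * L < 1 := by
    rw [lt_div_iff₀ hLpos] at hαL
    exact hαL
  -- smoothness facts
  have hgradCD : ContDiffOn ℝ 1 (gradient f) S := by
    have h1 : ContDiffOn ℝ 1 (fderiv ℝ f) S := hf.fderiv_of_isOpen hS (by norm_num)
    exact (InnerProductSpace.toDual ℝ
      (EuclideanSpace ℝ (Fin N))).symm.contDiff.comp_contDiffOn h1
  have hdiffgrad : ∀ z ∈ S, DifferentiableAt ℝ (gradient f) z := fun z hz =>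
    (hgradCD.differentiableOn one_ne_zero).differentiableAt (hS.mem_nhds hz)
  have hHcont : ContinuousOn (fun z => fderiv ℝ (gradient f) z) S :=
    hgradCD.continuousOn_fderiv_of_isOpen hS le_rfl
  have hgdiff : ∀ z ∈ S, HasFDerivAt g
      (ContinuousLinearMap.id ℝ (EuclideanSpace ℝ (Fin N)) - α • fderiv ℝ (gradient f) z) z := by
    intro z hz
    have h1 : HasFDerivAt (fun x => x - α • gradient f x)
        (ContinuousLinearMap.id ℝ (EuclideanSpace ℝ (Fin N)) - α • fderiv ℝ (gradient f) z) z :=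
      (hasFDerivAt_id z).sub ((hdiffgrad z hz).hasFDerivAt.const_smul α)
    have h2 : g = fun x => x - α • gradient f x := funext hg
    rw [h2]
    exact h1
  -- expansivity of g on S
  have hexp : ∀ x ∈ S, ∀ y ∈ S, (1 - α * L) * ‖x - y‖ ≤ ‖g x - g y‖ := by
    intro x hx y hy
    have hgradLip : ‖gradient f x - gradient f y‖ ≤ L * ‖x - y‖ :=
      hconv.norm_image_sub_le_of_norm_fderiv_le hdiffgrad hL hy hx
    have h1 : g x - g y = (x - y) - α • (gradient f x - gradient f y) := by
      rw [hg, hg, smul_sub]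
      abel
    have h2 : ‖α • (gradient f x - gradient f y)‖ ≤ α * (L * ‖x - y‖) := by
      rw [norm_smul, Real.norm_eq_abs, abs_of_pos hα]
      exact mul_le_mul_of_nonneg_left hgradLip hα.le
    calc (1 - α * L) * ‖x - y‖ = ‖x - y‖ - α * (L * ‖x - y‖) := by ring
      _ ≤ ‖x - y‖ - ‖α • (gradient f x - gradient f y)‖ := by linarith
      _ ≤ ‖(x - y) - α • (gradient f x - gradient f y)‖ := norm_sub_norm_le _ _
      _ = ‖g x - g y‖ := by rw [h1]
  -- preimages under g of Hausdorff-null sets are null within S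
  have hpre : ∀ Z : Set (EuclideanSpace ℝ (Fin N)), μH[(N : ℝ)] Z = 0 →
      μH[(N : ℝ)] (g ⁻¹' Z ∩ S) = 0 := by
    intro Z hZ
    set c0 : ℝ := 1 - α * L with hc0def
    have hc0 : 0 < c0 := by simp only [hc0def]; linarith
    set W := g ⁻¹' Z ∩ S with hWdef
    set F := Function.invFunOn g W with hF
    have hFprop : ∀ z ∈ g '' W, F z ∈ W ∧ g (F z) = z := by
      intro z hz
      obtain ⟨w, hw, hwz⟩ := hz
      exact ⟨Function.invFunOn_mem ⟨w, hw, hwz⟩, Function.invFunOn_eq ⟨w, hw, hwz⟩⟩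
    have hdist : ∀ u ∈ W, ∀ v ∈ W, ‖u - v‖ ≤ c0⁻¹ * ‖g u - g v‖ := by
      intro u hu v hv
      have h1 := hexp u hu.2 v hv.2
      calc ‖u - v‖ = c0⁻¹ * (c0 * ‖u - v‖) := by field_simp
        _ ≤ c0⁻¹ * ‖g u - g v‖ :=
            mul_le_mul_of_nonneg_left h1 (inv_nonneg.2 hc0.le)
    have hlip : LipschitzOnWith (c0⁻¹).toNNReal F (g '' W) := by
      apply LipschitzOnWith.of_dist_le_mul
      intro z hz w hw
      rw [Real.coe_toNNReal _ (inv_nonneg.2 hc0.le), dist_eq_norm, dist_eq_norm]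
      calc ‖F z - F w‖ ≤ c0⁻¹ * ‖g (F z) - g (F w)‖ :=
            hdist _ (hFprop z hz).1 _ (hFprop w hw).1
        _ = c0⁻¹ * ‖z - w‖ := by rw [(hFprop z hz).2, (hFprop w hw).2]
    have hWsub : W ⊆ F '' (g '' W) := by
      intro x hx
      have hz : g x ∈ g '' W := Set.mem_image_of_mem _ hx
      refine ⟨g x, hz, ?_⟩
      have h1 := hdist x hx (F (g x)) (hFprop _ hz).1
      rw [(hFprop _ hz).2] at h1
      simp only [sub_self, norm_zero, mul_zero] at h1
      have h2 : x - F (g x) = 0 := by rw [← norm_le_zero_iff]; exact h1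
      exact (sub_eq_zero.1 h2).symm
    have himgZ : μH[(N : ℝ)] (g '' W) = 0 :=
      measure_mono_null (by rintro _ ⟨w, hw, rfl⟩; exact hw.1) hZ
    have h3 := hlip.hausdorffMeasure_image_le (d := (N : ℝ)) (Nat.cast_nonneg N)
    rw [himgZ, mul_zero] at h3
    exact measure_mono_null hWsub (le_antisymm h3 zero_le)
  -- local structure around each strict saddle
  have hsaddle : ∀ p ∈ S, (∃ v : EuclideanSpace ℝ (Fin N),
      (inner ℝ (fderiv ℝ (gradient f) p v) v : ℝ) < 0) →
      ∃ r > 0, Metric.closedBall p r ⊆ S ∧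
        μH[(N : ℝ)] {x | ∀ k, g^[k] x ∈ Metric.closedBall p r} = 0 := by
    intro p hpS hvex
    obtain ⟨v, hv⟩ := hvex
    set H := fderiv ℝ (gradient f) p with hH
    -- symmetry of the Hessian
    have hsnd : IsSymmSndFDerivAt ℝ f p :=
      (hf.contDiffAt (hS.mem_nhds hpS)).isSymmSndFDerivAt minSmoothness_of_isRCLikeNormedField.le
    have hHeq : ∀ u, H u = (InnerProductSpace.toDual ℝ (EuclideanSpace ℝ (Fin N))).symm
        (fderiv ℝ (fderiv ℝ f) p u) := by
      intro u
      have h1 : gradient f = ⇑(InnerProductSpace.toDual ℝ (EuclideanSpace ℝ (Fin N))).symm ∘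
          (fderiv ℝ f) := rfl
      rw [hH, h1, LinearIsometryEquiv.comp_fderiv]
      rfl
    have hsymm : ∀ u w, ⟪H u, w⟫ = ⟪u, H w⟫ := by
      intro u w
      rw [hHeq u, hHeq w, InnerProductSpace.toDual_symm_apply,
        real_inner_comm, InnerProductSpace.toDual_symm_apply]
      exact hsnd u w
    set Hl : EuclideanSpace ℝ (Fin N) →ₗ[ℝ] EuclideanSpace ℝ (Fin N) := ↑H with hHl
    have hT : Hl.IsSymmetric := fun u w => hsymm u w
    have hn : Module.finrank ℝ (EuclideanSpace ℝ (Fin N)) = N := finrank_euclideanSpace_fin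
    set b := hT.eigenvectorBasis hn with hb
    set μ := hT.eigenvalues hn with hμ
    have hbi : ∀ i, H (b i) = μ i • b i := by
      intro i
      exact hT.apply_eigenvectorBasis hn i
    have hbnorm : ∀ i, ‖b i‖ = 1 := fun i => b.orthonormal.1 i
    have hμL : ∀ i, |μ i| ≤ L := by
      intro i
      have h1 : ‖H (b i)‖ = |μ i| := by
        rw [hbi i, norm_smul, Real.norm_eq_abs, hbnorm i, mul_one]
      have h2 : ‖H (b i)‖ ≤ ‖H‖ := by
        calc ‖H (b i)‖ ≤ ‖H‖ * ‖b i‖ := H.le_opNorm _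
          _ = ‖H‖ := by rw [hbnorm i, mul_one]
      rw [← h1]
      exact h2.trans (hL p hpS)
    -- a negative eigenvalue exists
    have hneg : ∃ i, μ i < 0 := by
      by_contra hcon
      push_neg at hcon
      have hexpand : ⟪H v, v⟫ = ∑ i, μ i * ⟪b i, v⟫ ^ 2 := by
        rw [← b.sum_inner_mul_inner (H v) v]
        refine Finset.sum_congr rfl fun i _ => ?_
        rw [hsymm v (b i), hbi i, real_inner_smul_right, real_inner_comm v (b i)]
        ring
      have hnn : (0:ℝ) ≤ ⟪H v, v⟫ := by
        rw [hexpand]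
        exact Finset.sum_nonneg fun i _ => mul_nonneg (hcon i) (sq_nonneg _)
      have hv' : ⟪H v, v⟫ < 0 := hv
      linarith
    obtain ⟨i₀, hi₀neg⟩ := hneg
    set t : ℝ := μ i₀ / 2 with ht
    have htneg : t < 0 := by rw [ht]; linarith
    set Iu : Finset (Fin N) := Finset.univ.filter (fun i => μ i ≤ t) with hIu
    have hi₀Iu : i₀ ∈ Iu := Finset.mem_filter.2 ⟨Finset.mem_univ _, by rw [ht]; linarith⟩
    set su : ℝ := 1 - α * t with hsu
    have hsu1 : 1 < su := by rw [hsu]; nlinarith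
    haveI : Nonempty (Fin N) := ⟨i₀⟩
    set γ : ℝ := Finset.univ.inf' Finset.univ_nonempty
      (fun i => if t < μ i then μ i - t else -t) with hγ
    have hγpos : 0 < γ := by
      rw [hγ, Finset.lt_inf'_iff]
      intro i _
      split_ifs with h
      · linarith
      · linarith
    have hγle : γ ≤ -t := by
      refine le_trans (Finset.inf'_le _ (Finset.mem_univ i₀)) ?_
      have h1 : ¬ t < μ i₀ := by rw [ht]; push_neg; linarith
      rw [if_neg h1]
    set ss : ℝ := su - α * γ with hss
    have hss0 : 0 ≤ ss := by
      rw [hss, hsu]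
      nlinarith
    have hssu : ss < su := by
      rw [hss]
      nlinarith
    set a : Fin N → ℝ := fun i => 1 - α * μ i with ha
    have hu : ∀ i ∈ Iu, su ≤ a i := by
      intro i hi
      have h1 := (Finset.mem_filter.1 hi).2
      simp only [ha, hsu]
      nlinarith
    have hsb : ∀ i ∉ Iu, |a i| ≤ ss := by
      intro i hi
      have h1 : t < μ i := by
        by_contra h
        exact hi (Finset.mem_filter.2 ⟨Finset.mem_univ _, not_lt.1 h⟩)
      have h2 : γ ≤ μ i - t := by
        refine le_trans (Finset.inf'_le _ (Finset.mem_univ i)) ?_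
        rw [if_pos h1]
      have h3 : μ i ≤ L := le_trans (le_abs_self _) (hμL i)
      have h4 : a i ≤ ss := by
        simp only [ha, hss, hsu]
        nlinarith
      have h5 : 0 < a i := by
        simp only [ha]
        nlinarith
      rw [abs_of_pos h5]
      exact h4
    set ε : ℝ := min ((su - 1)/2) ((su - ss)/4) / Real.sqrt 2 with hε
    have hsqrt2 : (0:ℝ) < Real.sqrt 2 := by positivity
    have hε0 : 0 < ε := by
      rw [hε]
      apply div_pos _ hsqrt2
      apply lt_min <;> linarith
    have hsqε : Real.sqrt 2 * ε = min ((su - 1)/2) ((su - ss)/4) := by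
      rw [hε]
      field_simp
    have hc' : 1 < su - Real.sqrt 2 * ε := by
      rw [hsqε]
      have h1 := min_le_left ((su - 1)/2) ((su - ss)/4)
      linarith
    have hgap : ss + Real.sqrt 2 * ε ≤ su - Real.sqrt 2 * ε := by
      have h1 := min_le_right ((su - 1)/2) ((su - ss)/4)
      rw [hsqε]
      linarith
    -- choose the radius
    have hεα : 0 < ε / α := div_pos hε0 hα
    have hca : ContinuousAt (fun z => fderiv ℝ (gradient f) z) p :=
      hHcont.continuousAt (hS.mem_nhds hpS)
    have hball : (fun z => fderiv ℝ (gradient f) z) ⁻¹' Metric.ball H (ε/α) ∈ 𝓝 p :=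
      hca (Metric.ball_mem_nhds _ hεα)
    obtain ⟨r, hr0, hrsub⟩ := Metric.nhds_basis_closedBall.mem_iff.1
      (Filter.inter_mem hball (hS.mem_nhds hpS))
    have hrS : Metric.closedBall p r ⊆ S := fun z hz => (hrsub hz).2
    have hrH : ∀ z ∈ Metric.closedBall p r, ‖fderiv ℝ (gradient f) z - H‖ < ε/α := by
      intro z hz
      have h1 := (hrsub hz).1
      simpa [Metric.mem_ball, dist_eq_norm] using h1
    -- mean value estimate
    set A := ContinuousLinearMap.id ℝ (EuclideanSpace ℝ (Fin N)) - α • H with hA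
    have hmvt : ∀ x ∈ Metric.closedBall p r, ∀ y ∈ Metric.closedBall p r,
        ‖(g x - g y) - A (x - y)‖ ≤ ε * ‖x - y‖ := by
      intro x hx y hy
      have hdiff : ∀ z ∈ Metric.closedBall p r,
          DifferentiableAt ℝ (fun w => g w - A w) z := fun z hz =>
        ((hgdiff z (hrS hz)).sub A.hasFDerivAt).differentiableAt
      have hbound : ∀ z ∈ Metric.closedBall p r, ‖fderiv ℝ (fun w => g w - A w) z‖ ≤ ε := by
        intro z hz
        have h1 : HasFDerivAt (fun w => g w - A w)
            ((ContinuousLinearMap.id ℝ (EuclideanSpace ℝ (Fin N)) -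
              α • fderiv ℝ (gradient f) z) - A) z :=
          (hgdiff z (hrS hz)).sub A.hasFDerivAt
        rw [h1.fderiv]
        have h2 : (ContinuousLinearMap.id ℝ (EuclideanSpace ℝ (Fin N)) -
            α • fderiv ℝ (gradient f) z) - A = α • (H - fderiv ℝ (gradient f) z) := by
          rw [hA, smul_sub]
          abel
        rw [h2, norm_smul, Real.norm_eq_abs, abs_of_pos hα]
        have h3 : ‖H - fderiv ℝ (gradient f) z‖ ≤ ε / α := by
          rw [norm_sub_rev]
          exact (hrH z hz).le
        calc α * ‖H - fderiv ℝ (gradient f) z‖ ≤ α * (ε/α) :=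
              mul_le_mul_of_nonneg_left h3 hα.le
          _ = ε := by field_simp
      have hres := (convex_closedBall p r).norm_image_sub_le_of_norm_fderiv_le
        hdiff hbound hy hx
      have heq : (fun w => g w - A w) x - (fun w => g w - A w) y =
          (g x - g y) - A (x - y) := by
        simp only
        rw [A.map_sub]
        abel
      rw [heq] at hres
      exact hres
    -- conjugate to coordinates
    set g' := ⇑b.repr ∘ g ∘ ⇑b.repr.symm with hg'
    set p' := b.repr p with hp'
    have hAd : ∀ d, b.repr (A d) = gdD a (b.repr d) := by
      intro d
      ext i
      have h1 : b.repr (A d) i = ⟪b i, A d⟫ := b.repr_apply_apply _ i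
      have h2 : gdD a (b.repr d) i = a i * ⟪b i, d⟫ := by
        rw [gdD, WithLp.ofLp_toLp, b.repr_apply_apply]
      rw [h1, h2]
      have h3 : A d = d - α • H d := rfl
      rw [h3, inner_sub_right, real_inner_smul_right]
      have h4 : ⟪b i, H d⟫ = μ i * ⟪b i, d⟫ := by
        rw [← hsymm (b i) d, hbi i, real_inner_smul_left]
      rw [h4, ha]
      ring
    have herr' : ∀ x ∈ Metric.closedBall p' r, ∀ y ∈ Metric.closedBall p' r,
        ‖(g' x - g' y) - gdD a (x - y)‖ ≤ ε * ‖x - y‖ := by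
      intro x hx y hy
      set sx := b.repr.symm x with hsx'
      set sy := b.repr.symm y with hsy'
      have hsx : sx ∈ Metric.closedBall p r := by
        rw [Metric.mem_closedBall] at hx ⊢
        calc dist sx p = dist (b.repr sx) (b.repr p) := (b.repr.dist_map sx p).symm
          _ = dist x p' := by rw [hsx', b.repr.apply_symm_apply, hp']
          _ ≤ r := hx
      have hsy : sy ∈ Metric.closedBall p r := by
        rw [Metric.mem_closedBall] at hy ⊢
        calc dist sy p = dist (b.repr sy) (b.repr p) := (b.repr.dist_map sy p).symm
          _ = dist y p' := by rw [hsy', b.repr.apply_symm_apply, hp']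
          _ ≤ r := hy
      have hxy : x - y = b.repr (sx - sy) := by
        rw [map_sub, hsx', hsy', b.repr.apply_symm_apply, b.repr.apply_symm_apply]
      have hkey : (g' x - g' y) - gdD a (x - y) = b.repr ((g sx - g sy) - A (sx - sy)) := by
        rw [map_sub, map_sub, hAd, ← hxy]
        rfl
      rw [hkey, b.repr.norm_map]
      calc ‖(g sx - g sy) - A (sx - sy)‖ ≤ ε * ‖sx - sy‖ := hmvt sx hsx sy hsy
        _ = ε * ‖x - y‖ := by rw [hxy, b.repr.norm_map]
    have hK' := gd_graph_null g' p' r a Iu su ss ε hss0 hε0.le hc' hgap hu hsb ⟨i₀, hi₀Iu⟩ herr'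
    refine ⟨r, hr0, hrS, ?_⟩
    have hsc : ∀ (z : EuclideanSpace ℝ (Fin N)) (k : ℕ),
        g'^[k] (b.repr z) = b.repr (g^[k] z) := by
      intro z k
      induction k with
      | zero => rfl
      | succ k ih =>
        rw [Function.iterate_succ_apply', Function.iterate_succ_apply', ih]
        show b.repr (g (b.repr.symm (b.repr (g^[k] z)))) = _
        rw [b.repr.symm_apply_apply]
    have hsub : {x | ∀ k, g^[k] x ∈ Metric.closedBall p r} ⊆
        ⇑b.repr.symm '' {x | ∀ k, g'^[k] x ∈ Metric.closedBall p' r} := by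
      intro x hx
      refine ⟨b.repr x, fun k => ?_, b.repr.symm_apply_apply x⟩
      rw [hsc x k, Metric.mem_closedBall]
      calc dist (b.repr (g^[k] x)) p' = dist (g^[k] x) p := by
            rw [hp']; exact b.repr.dist_map _ _
        _ ≤ r := hx k
    have himg := (b.repr.symm.isometry.lipschitz).hausdorffMeasure_image_le
      (d := (N:ℝ)) (Nat.cast_nonneg N) {x | ∀ k, g'^[k] x ∈ Metric.closedBall p' r}
    rw [hK', mul_zero] at himg
    exact measure_mono_null hsub (le_antisymm himg zero_le)
  -- assemble: Lindelöf + countable union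
  set P : EuclideanSpace ℝ (Fin N) → Prop := fun p => p ∈ S ∧
    ∃ v : EuclideanSpace ℝ (Fin N), (inner ℝ (fderiv ℝ (gradient f) p v) v : ℝ) < 0 with hP
  choose! r hr0 hrS hrK using fun q : Subtype P => hsaddle q q.2.1 q.2.2
  obtain ⟨T, hTc, hTU⟩ := TopologicalSpace.isOpen_iUnion_countable
    (fun q : Subtype P => Metric.ball (q : EuclideanSpace ℝ (Fin N)) (r q / 2))
    (fun q => Metric.isOpen_ball)
  have hZnull : ∀ (q : Subtype P) (m : ℕ),
      μH[(N : ℝ)] ((g^[m]) ⁻¹'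
        {x | ∀ k, g^[k] x ∈ Metric.closedBall (q : EuclideanSpace ℝ (Fin N)) (r q)} ∩ S) = 0 := by
    intro q m
    induction m with
    | zero =>
      simp only [Function.iterate_zero, Set.preimage_id]
      exact measure_mono_null Set.inter_subset_left (hrK q)
    | succ m ih =>
      refine measure_mono_null ?_ (hpre _ ih)
      intro x hx
      refine ⟨Set.mem_preimage.2 ⟨?_, hinv hx.2⟩, hx.2⟩
      have h1 := hx.1
      rw [Set.mem_preimage, Function.iterate_succ_apply] at h1
      exact h1
  have hcover : {x ∈ S | ∃ p ∈ S, (gradient f p = 0 ∧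
      ∃ v : EuclideanSpace ℝ (Fin N),
        (inner ℝ (fderiv ℝ (gradient f) p v) v : ℝ) < 0) ∧
      Tendsto (fun k => g^[k] x) atTop (𝓝 p)} ⊆
      ⋃ q ∈ T, ⋃ m : ℕ, ((g^[m]) ⁻¹'
        {x | ∀ k, g^[k] x ∈ Metric.closedBall (q : EuclideanSpace ℝ (Fin N)) (r q)} ∩ S) := by
    rintro x ⟨hxS, p, hpS, ⟨_, v, hv⟩, htend⟩
    have hpP : P p := ⟨hpS, v, hv⟩
    have hmem : p ∈ ⋃ q : Subtype P, Metric.ball (q : EuclideanSpace ℝ (Fin N)) (r q / 2) := by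
      refine Set.mem_iUnion.2 ⟨⟨p, hpP⟩, ?_⟩
      have := half_pos (hr0 ⟨p, hpP⟩)
      simpa [Metric.mem_ball] using this
    rw [← hTU] at hmem
    obtain ⟨q, hqT, hq⟩ := Set.mem_iUnion₂.1 hmem
    have hdpq : dist p (q : EuclideanSpace ℝ (Fin N)) < r q / 2 := Metric.mem_ball.1 hq
    obtain ⟨m, hm⟩ := (Metric.tendsto_atTop.1 htend) (r q / 2) (half_pos (hr0 q))
    refine Set.mem_biUnion hqT (Set.mem_iUnion.2 ⟨m, ⟨?_, hxS⟩⟩)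
    intro k
    rw [← Function.iterate_add_apply]
    have h1 := hm (k + m) (Nat.le_add_left m k)
    have h2 : dist (g^[k + m] x) (q : EuclideanSpace ℝ (Fin N)) ≤
        dist (g^[k + m] x) p + dist p (q : EuclideanSpace ℝ (Fin N)) := dist_triangle _ _ _
    have h3 : dist (g^[k + m] x) (q : EuclideanSpace ℝ (Fin N)) ≤ r q := by linarith
    exact Metric.mem_closedBall.2 h3
  have hunion : μH[(N : ℝ)] (⋃ q ∈ T, ⋃ m : ℕ, ((g^[m]) ⁻¹'
      {x | ∀ k, g^[k] x ∈ Metric.closedBall (q : EuclideanSpace ℝ (Fin N)) (r q)} ∩ S)) = 0 := by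
    haveI := hTc.to_subtype
    rw [Set.biUnion_eq_iUnion]
    refine measure_iUnion_null fun q => measure_iUnion_null fun m => hZnull _ m
  exact gd_vol_zero _ (measure_mono_null hcover hunion)
end

section
/- Let f be twice continuously differentiable on an open set S ⊆ ℝ^N with set of local minima C*, and suppose γ < inf_{x ∈ C*} ‖∇²f(x)‖₂ < ∞. If the step size satisfies α ≥ 2/γ, then every local minimum x* of f is a Lyapunov unstable fixed point of the gradient descent map g(x) = x − α∇f(x). -/
noncomputable section
namespace LSSaux

variable {N : ℕ}

/-- coordinate projection onto a finset of indices -/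
def proj (s : Finset (Fin N)) (y : EuclideanSpace ℝ (Fin N)) : EuclideanSpace ℝ (Fin N) :=
  WithLp.toLp 2 (fun i => if i ∈ s then y i else 0)

lemma proj_sub (s : Finset (Fin N)) (y z : EuclideanSpace ℝ (Fin N)) :
    proj s (y - z) = proj s y - proj s z := by
  ext i
  simp only [proj, PiLp.sub_apply, PiLp.toLp_apply]
  split <;> simp

lemma proj_add_compl (s : Finset (Fin N)) (y : EuclideanSpace ℝ (Fin N)) :
    proj s y + proj sᶜ y = y := by
  ext i
  simp only [proj, PiLp.add_apply, Finset.mem_compl, PiLp.toLp_apply]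
  by_cases h : i ∈ s <;> simp [h]

lemma helper1 (y z : EuclideanSpace ℝ (Fin N)) (c : ℝ) (hc : 0 ≤ c)
    (h : ∀ i, (y i)^2 ≤ c^2 * (z i)^2) : ‖y‖ ≤ c * ‖z‖ := by
  rw [EuclideanSpace.norm_eq, EuclideanSpace.norm_eq]
  have e : c * Real.sqrt (∑ i, ‖z i‖^2) = Real.sqrt (c^2 * ∑ i, ‖z i‖^2) := by
    rw [Real.sqrt_mul (by positivity), Real.sqrt_sq hc]
  rw [e]
  apply Real.sqrt_le_sqrt
  rw [Finset.mul_sum]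
  apply Finset.sum_le_sum
  intro i _
  simpa [Real.norm_eq_abs, sq_abs] using h i

lemma norm_proj_le (s : Finset (Fin N)) (y : EuclideanSpace ℝ (Fin N)) :
    ‖proj s y‖ ≤ ‖y‖ := by
  have := helper1 (proj s y) y 1 zero_le_one (by
    intro i
    simp only [proj, one_pow, one_mul, PiLp.toLp_apply]
    split
    · exact le_refl _
    · simpa using sq_nonneg _)
  simpa using this

lemma norm_le_proj (s : Finset (Fin N)) (y : EuclideanSpace ℝ (Fin N)) :
    ‖y‖ ≤ ‖proj s y‖ + ‖proj sᶜ y‖ := by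
  conv_lhs => rw [← proj_add_compl s y]
  exact norm_add_le _ _

lemma proj_diag_upper (s : Finset (Fin N)) (d : Fin N → ℝ) (y : EuclideanSpace ℝ (Fin N))
    (hd : ∀ i ∈ s, |d i| ≤ 1) :
    ‖proj s (WithLp.toLp 2 (fun i => d i * y i) : EuclideanSpace ℝ (Fin N))‖ ≤ ‖proj s y‖ := by
  have := helper1 (proj s (WithLp.toLp 2 (fun i => d i * y i))) (proj s y) 1 zero_le_one (by
    intro i
    simp only [proj, one_pow, one_mul, PiLp.toLp_apply]
    split
    · rename_i h
      have h1 := hd i h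
      have h2 : (d i)^2 ≤ 1 := by nlinarith [abs_nonneg (d i), sq_abs (d i)]
      nlinarith [sq_nonneg (y i)]
    · simpa using sq_nonneg _)
  simpa using this

lemma proj_diag_lower (s : Finset (Fin N)) (d : Fin N → ℝ) (y : EuclideanSpace ℝ (Fin N))
    (ρ : ℝ) (hρ : 0 ≤ ρ) (hd : ∀ i ∈ s, ρ ≤ |d i|) :
    ρ * ‖proj s y‖ ≤ ‖proj s (WithLp.toLp 2 (fun i => d i * y i) : EuclideanSpace ℝ (Fin N))‖ := by
  rw [EuclideanSpace.norm_eq, EuclideanSpace.norm_eq]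
  have e : ρ * Real.sqrt (∑ i, ‖proj s y i‖^2) = Real.sqrt (ρ^2 * ∑ i, ‖proj s y i‖^2) := by
    rw [Real.sqrt_mul (by positivity), Real.sqrt_sq hρ]
  rw [e]
  apply Real.sqrt_le_sqrt
  rw [Finset.mul_sum]
  apply Finset.sum_le_sum
  intro i _
  simp only [proj, Real.norm_eq_abs, sq_abs, PiLp.toLp_apply]
  split
  · rename_i h
    have h1 := hd i h
    have h2 : ρ^2 ≤ (d i)^2 := by nlinarith [abs_nonneg (d i), sq_abs (d i)]
    calc ρ^2 * (y i)^2 ≤ (d i)^2 * (y i)^2 := by nlinarith [sq_nonneg (y i)]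
    _ = (d i * y i)^2 := by ring
  · simp

lemma proj_eq_self (s : Finset (Fin N)) (y : EuclideanSpace ℝ (Fin N))
    (h : ∀ i ∉ s, y i = 0) : proj s y = y := by
  ext i
  simp only [proj, PiLp.toLp_apply]
  split
  · rfl
  · rename_i hi
    exact (h i hi).symm

lemma proj_eq_zero (s : Finset (Fin N)) (y : EuclideanSpace ℝ (Fin N))
    (h : ∀ i ∈ s, y i = 0) : proj s y = 0 := by
  ext i
  simp only [proj, PiLp.toLp_apply]
  split
  · rename_i hi
    simpa using h i hi
  · rfl

/-- Abstract unstable-cone escape lemma for a perturbed diagonal linear recursion. -/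
lemma cone_escape {N : ℕ} (U : Finset (Fin N)) (d : Fin N → ℝ) (ρu : ℝ)
    (hρu1 : 1 < ρu)
    (hρu_le : ∀ i ∈ U, ρu ≤ |d i|) (hUc : ∀ i ∈ Uᶜ, |d i| ≤ 1)
    (y dy : ℕ → EuclideanSpace ℝ (Fin N))
    (hdy : ∀ k, dy k = WithLp.toLp 2 (fun i => d i * y k i))
    (herr : ∀ k, ‖y (k+1) - dy k‖ ≤ (ρu - 1)/4 * (‖proj U (y k)‖ + ‖proj Uᶜ (y k)‖))
    (hb0 : ‖proj Uᶜ (y 0)‖ ≤ ‖proj U (y 0)‖) :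
    ∀ k, ‖proj Uᶜ (y k)‖ ≤ ‖proj U (y k)‖ ∧
      ((ρu+1)/2)^k * ‖proj U (y 0)‖ ≤ ‖proj U (y k)‖ := by
  intro k
  induction k with
  | zero => exact ⟨hb0, by simp⟩
  | succ k ih =>
    obtain ⟨h1, h2⟩ := ih
    have hak0 : 0 ≤ ‖proj U (y k)‖ := norm_nonneg _
    have hbk0 : 0 ≤ ‖proj Uᶜ (y k)‖ := norm_nonneg _
    have herr2 : ‖y (k+1) - dy k‖ ≤ (ρu - 1)/2 * ‖proj U (y k)‖ := by
      have h3 := herr k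
      have h4 : 0 ≤ (ρu - 1) * (‖proj U (y k)‖ - ‖proj Uᶜ (y k)‖) :=
        mul_nonneg (by linarith) (by linarith)
      nlinarith
    have e1 : ρu * ‖proj U (y k)‖ ≤ ‖proj U (dy k)‖ := by
      rw [hdy k]
      exact proj_diag_lower U d (y k) ρu (by linarith) hρu_le
    have e2 : ‖proj Uᶜ (dy k)‖ ≤ ‖proj Uᶜ (y k)‖ := by
      rw [hdy k]
      exact proj_diag_upper Uᶜ d (y k) hUc
    have eproj : ∀ s : Finset (Fin N), ‖proj s (y (k+1)) - proj s (dy k)‖ ≤ ‖y (k+1) - dy k‖ := by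
      intro s
      rw [← proj_sub]
      exact norm_proj_le _ _
    have e3 : ‖proj U (dy k)‖ - ‖y (k+1) - dy k‖ ≤ ‖proj U (y (k+1))‖ := by
      have h5 := norm_sub_norm_le (proj U (dy k)) (proj U (y (k+1)))
      have h6 := eproj U
      rw [norm_sub_rev] at h6
      linarith
    have e4 : ‖proj Uᶜ (y (k+1))‖ ≤ ‖proj Uᶜ (dy k)‖ + ‖y (k+1) - dy k‖ := by
      have h5 := norm_add_le (proj Uᶜ (dy k)) (proj Uᶜ (y (k+1)) - proj Uᶜ (dy k))
      rw [add_sub_cancel] at h5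
      have h6 := eproj Uᶜ
      linarith
    constructor
    · linarith
    · have h7 : ((ρu+1)/2)^(k+1) * ‖proj U (y 0)‖
          = ((ρu+1)/2) * (((ρu+1)/2)^k * ‖proj U (y 0)‖) := by ring
      rw [h7]
      have h8 : ((ρu+1)/2) * (((ρu+1)/2)^k * ‖proj U (y 0)‖) ≤ ((ρu+1)/2) * ‖proj U (y k)‖ :=
        mul_le_mul_of_nonneg_left h2 (by linarith)
      linarith

end LSSaux

open InnerProductSpace in
/-- The inverse of `toDual` over `ℝ`, as a genuinely linear isometry equiv. -/
noncomputable def LSSdualIsoR (E : Type*) [NormedAddCommGroup E] [InnerProductSpace ℝ E]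
    [CompleteSpace E] : StrongDual ℝ E ≃ₗᵢ[ℝ] E where
  toFun := (toDual ℝ E).symm
  invFun := toDual ℝ E
  map_add' x y := map_add _ x y
  map_smul' c x := by
    have := (toDual ℝ E).symm.map_smulₛₗ c x
    simpa using this
  left_inv x := (toDual ℝ E).apply_symm_apply x
  right_inv x := (toDual ℝ E).symm_apply_apply x
  norm_map' x := (toDual ℝ E).symm.norm_map x

open InnerProductSpace

set_option maxHeartbeats 3200000 in
/-- Upper bound on step size: `f` twice continuously
differentiable on an open `S ⊆ ℝ^N`; if `γ` is a strict lower bound on the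
spectral norm of the Hessian over the set of local minima, and `α ≥ 2/γ`, then
every local minimum `x* ∈ S` of `f` is a Lyapunov unstable fixed point of the
gradient descent map `g x = x - α • ∇f x` (i.e. it is not Lyapunov stable). -/
theorem large_step_size_makes_minima_unstable
    {N : ℕ} (S : Set (EuclideanSpace ℝ (Fin N))) (hS : IsOpen S)
    (f : EuclideanSpace ℝ (Fin N) → ℝ) (hf : ContDiffOn ℝ 2 f S)
    (γ : ℝ) (hγ : 0 < γ)
    (hlow : ∀ x ∈ S, IsLocalMin f x → γ < ‖fderiv ℝ (gradient f) x‖)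
    (α : ℝ) (hα : 2 / γ ≤ α)
    (g : EuclideanSpace ℝ (Fin N) → EuclideanSpace ℝ (Fin N))
    (hg : ∀ x, g x = x - α • gradient f x) :
    ∀ xstar ∈ S, IsLocalMin f xstar →
      (g xstar = xstar ∧
       ¬ (∀ ε > 0, ∃ δ > 0, ∀ x, ‖x - xstar‖ < δ → ∀ k : ℕ, ‖g^[k] x - xstar‖ < ε)) := by
  intro xstar hxS hmin
  have hα0 : 0 < α := lt_of_lt_of_le (div_pos two_pos hγ) hα
  have hαγ : 2 ≤ α * γ := by
    rw [div_le_iff₀ hγ] at hα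
    linarith
  -- differentiability set-up
  have hfx : ContDiffAt ℝ 2 f xstar := hf.contDiffAt (hS.mem_nhds hxS)
  have hf1 : ContDiffAt ℝ 1 (fderiv ℝ f) xstar := hfx.fderiv_right (by norm_num)
  have hdf' : DifferentiableAt ℝ (fderiv ℝ f) xstar := hf1.differentiableAt one_ne_zero
  set φ := LSSdualIsoR (EuclideanSpace ℝ (Fin N)) with hφ
  have hgradcomp : gradient f = φ ∘ fderiv ℝ f := rfl
  have hdg : DifferentiableAt ℝ (gradient f) xstar := by
    rw [hgradcomp]
    exact φ.differentiable.differentiableAt.comp xstar hdf'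
  set H := fderiv ℝ (gradient f) xstar with hH
  -- symmetry of the Hessian H
  have hHeq : H = (φ.toContinuousLinearEquiv : StrongDual ℝ (EuclideanSpace ℝ (Fin N))
      →L[ℝ] EuclideanSpace ℝ (Fin N)).comp (fderiv ℝ (fderiv ℝ f) xstar) := by
    rw [hH, hgradcomp]
    exact φ.comp_fderiv
  have hsym2 : IsSymmSndFDerivAt ℝ f xstar := hfx.isSymmSndFDerivAt (by simp)
  have hinner : ∀ u v : EuclideanSpace ℝ (Fin N),
      ⟪H u, v⟫_ℝ = fderiv ℝ (fderiv ℝ f) xstar u v := by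
    intro u v
    rw [hHeq]
    simp only [ContinuousLinearMap.comp_apply, ContinuousLinearEquiv.coe_coe,
      LinearIsometryEquiv.coe_toContinuousLinearEquiv]
    exact toDual_symm_apply
  have hsymm : (↑H : EuclideanSpace ℝ (Fin N) →ₗ[ℝ] EuclideanSpace ℝ (Fin N)).IsSymmetric := by
    intro u v
    show ⟪H u, v⟫_ℝ = ⟪u, H v⟫_ℝ
    rw [hinner, real_inner_comm, hinner]
    exact hsym2 u v
  -- spectral decomposition
  have hn : Module.finrank ℝ (EuclideanSpace ℝ (Fin N)) = N := finrank_euclideanSpace_fin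
  set b := hsymm.eigenvectorBasis hn with hb
  set μ := hsymm.eigenvalues hn with hμdef
  have hμ : ∀ (v : EuclideanSpace ℝ (Fin N)) (i : Fin N),
      b.repr (H v) i = μ i * b.repr v i := by
    intro v i
    exact hsymm.eigenvectorBasis_apply_self_apply hn v i
  -- some eigenvalue exceeds γ in absolute value
  have hnormH : γ < ‖H‖ := hlow xstar hxS hmin
  obtain ⟨i0, hi0⟩ : ∃ i, γ < |μ i| := by
    by_contra hcon
    push_neg at hcon
    have hb2 : ‖H‖ ≤ γ := by
      apply ContinuousLinearMap.opNorm_le_bound _ hγ.le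
      intro v
      have h1 : ‖H v‖ = ‖b.repr (H v)‖ := (b.repr.norm_map (H v)).symm
      have h2 : ‖v‖ = ‖b.repr v‖ := (b.repr.norm_map v).symm
      rw [h1, h2]
      apply LSSaux.helper1 _ _ γ hγ.le
      intro i
      rw [hμ v i]
      have h3 := hcon i
      have h4 := abs_nonneg (μ i)
      have h5 : (μ i)^2 ≤ γ^2 := by nlinarith [sq_abs (μ i)]
      nlinarith [sq_nonneg (b.repr v i)]
    linarith
  -- the unstable index set
  set d : Fin N → ℝ := fun i => 1 - α * μ i with hd
  set U : Finset (Fin N) := Finset.univ.filter (fun i => 1 < |d i|) with hU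
  have hi0U : i0 ∈ U := by
    rw [hU, Finset.mem_filter]
    refine ⟨Finset.mem_univ _, ?_⟩
    rcases lt_abs.mp hi0 with hcase | hcase
    · have h2 : 2 < α * μ i0 := by
        have := mul_lt_mul_of_pos_left hcase hα0
        nlinarith
      have h3 := neg_le_abs (d i0)
      have h4 : d i0 = 1 - α * μ i0 := rfl
      rw [h4] at h3 ⊢
      linarith
    · have h2 : α * μ i0 < 0 := mul_neg_of_pos_of_neg hα0 (by linarith)
      have h3 := le_abs_self (d i0)
      have h4 : d i0 = 1 - α * μ i0 := rfl
      rw [h4] at h3 ⊢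
      linarith
  have hUne : U.Nonempty := ⟨i0, hi0U⟩
  set ρu : ℝ := U.inf' hUne (fun i => |d i|) with hρudef
  have hρu1 : 1 < ρu := by
    rw [hρudef, Finset.lt_inf'_iff]
    intro i hi
    rw [hU, Finset.mem_filter] at hi
    exact hi.2
  have hρu_le : ∀ i ∈ U, ρu ≤ |d i| := fun i hi => Finset.inf'_le _ hi
  have hUc : ∀ i ∈ Uᶜ, |d i| ≤ 1 := by
    intro i hi
    rw [Finset.mem_compl, hU, Finset.mem_filter] at hi
    push_neg at hi
    exact hi (Finset.mem_univ _)
  set δ' : ℝ := (ρu - 1) / 4 with hδ'def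
  have hδ'0 : 0 < δ' := by rw [hδ'def]; linarith
  set δ : ℝ := δ' / α with hδdef
  have hδ0 : 0 < δ := div_pos hδ'0 hα0
  -- fixed point
  have h0 : fderiv ℝ f xstar = 0 := hmin.fderiv_eq_zero
  have grad0 : gradient f xstar = 0 := by
    rw [hgradcomp, Function.comp_apply, h0, map_zero]
  refine ⟨by rw [hg, grad0, smul_zero, sub_zero], ?_⟩
  -- Taylor estimate on a small ball
  have hH' : HasFDerivAt (gradient f) H xstar := hdg.hasFDerivAt
  have hlito := hH'.isLittleO
  have hev := hlito.def hδ0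
  rw [Metric.eventually_nhds_iff] at hev
  obtain ⟨ε, hε0, hballε⟩ := hev
  -- assume Lyapunov stability, derive a contradiction
  intro hstab
  obtain ⟨δ₀, hδ₀0, hst⟩ := hstab ε hε0
  set t := δ₀ / 2 with htdef
  have ht0 : 0 < t := by rw [htdef]; linarith
  set x0 : EuclideanSpace ℝ (Fin N) := xstar + t • b i0 with hx0
  have hx0n : ‖x0 - xstar‖ = t := by
    rw [hx0, add_sub_cancel_left, norm_smul, Real.norm_eq_abs, abs_of_pos ht0,
      b.orthonormal.1 i0, mul_one]
  have horbit : ∀ k, ‖g^[k] x0 - xstar‖ < ε := by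
    apply hst
    rw [hx0n, htdef]
    linarith
  set w : ℕ → EuclideanSpace ℝ (Fin N) := fun k => g^[k] x0 - xstar with hw
  set y : ℕ → EuclideanSpace ℝ (Fin N) := fun k => b.repr (w k) with hy
  set dy : ℕ → EuclideanSpace ℝ (Fin N) := fun k => WithLp.toLp 2 (fun i => d i * y k i) with hdy
  have hdyk : ∀ k, dy k = WithLp.toLp 2 (fun i => d i * y k i) := fun k => by rw [hdy]
  have hyn : ∀ k, ‖y k‖ = ‖w k‖ := by
    intro k
    rw [hy]
    exact b.repr.norm_map (w k)
  -- bound on the Taylor remainder along the orbit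
  have hRbound : ∀ k, ‖gradient f (g^[k] x0) - H (w k)‖ ≤ δ * ‖w k‖ := by
    intro k
    have h2 : dist (g^[k] x0) xstar < ε := by
      rw [dist_eq_norm]
      exact horbit k
    have h3 := hballε h2
    rw [grad0, sub_zero] at h3
    exact h3
  -- coordinate recurrence
  have hrec : ∀ k, y (k+1) = dy k - α • b.repr (gradient f (g^[k] x0) - H (w k)) := by
    intro k
    have hwsucc : w (k+1) = w k - α • H (w k) - α • (gradient f (g^[k] x0) - H (w k)) := by
      show g^[k+1] x0 - xstar = _
      rw [Function.iterate_succ_apply', hg (g^[k] x0)]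
      show g^[k] x0 - α • gradient f (g^[k] x0) - xstar
        = (g^[k] x0 - xstar) - α • H (w k) - α • (gradient f (g^[k] x0) - H (w k))
      rw [smul_sub]
      abel
    have h1 : y (k+1) = b.repr (w (k+1)) := by rw [hy]
    rw [h1, hwsucc, map_sub, map_sub, map_smul, map_smul]
    ext i
    have h2 : dy k i = d i * b.repr (w k) i := by simp only [hdy, hy]
    simp only [PiLp.sub_apply, PiLp.smul_apply, smul_eq_mul, h2]
    rw [hμ (w k) i]
    simp only [hd]
    ring
  -- error estimate in the form required by the cone lemma
  have herr : ∀ k, ‖y (k+1) - dy k‖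
      ≤ (ρu - 1)/4 * (‖LSSaux.proj U (y k)‖ + ‖LSSaux.proj Uᶜ (y k)‖) := by
    intro k
    have h1 : y (k+1) - dy k = -(α • b.repr (gradient f (g^[k] x0) - H (w k))) := by
      rw [hrec k]
      abel
    rw [h1, norm_neg, norm_smul, Real.norm_eq_abs, abs_of_pos hα0]
    have h2 : ‖b.repr (gradient f (g^[k] x0) - H (w k))‖ ≤ δ * ‖w k‖ := by
      rw [b.repr.norm_map]
      exact hRbound k
    have h3 : α * ‖b.repr (gradient f (g^[k] x0) - H (w k))‖ ≤ α * (δ * ‖w k‖) :=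
      mul_le_mul_of_nonneg_left h2 hα0.le
    have h4 : α * (δ * ‖w k‖) = δ' * ‖w k‖ := by
      rw [hδdef]
      field_simp
    have h5 : ‖w k‖ ≤ ‖LSSaux.proj U (y k)‖ + ‖LSSaux.proj Uᶜ (y k)‖ := by
      rw [← hyn]
      exact LSSaux.norm_le_proj U (y k)
    have h6 : δ' * ‖w k‖ ≤ δ' * (‖LSSaux.proj U (y k)‖ + ‖LSSaux.proj Uᶜ (y k)‖) :=
      mul_le_mul_of_nonneg_left h5 hδ'0.le
    rw [← hδ'def]
    linarith
  -- base case: the initial displacement lies in the unstable cone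
  have hy0single : y 0 = t • EuclideanSpace.single i0 (1:ℝ) := by
    have h1 : y 0 = b.repr (x0 - xstar) := by
      simp only [hy, hw, Function.iterate_zero_apply]
    rw [h1, hx0, add_sub_cancel_left, map_smul, b.repr_self]
  have hy0 : ∀ i, i ≠ i0 → y 0 i = 0 := by
    intro i hi
    rw [hy0single]
    simp [EuclideanSpace.single_apply, hi]
  have ha0 : ‖LSSaux.proj U (y 0)‖ = t := by
    rw [LSSaux.proj_eq_self U (y 0) (fun i hi => hy0 i (fun h => hi (h ▸ hi0U))), hy0single,
      norm_smul, Real.norm_eq_abs, abs_of_pos ht0, EuclideanSpace.norm_single, norm_one, mul_one]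
  have hbb0 : ‖LSSaux.proj Uᶜ (y 0)‖ = 0 := by
    rw [LSSaux.proj_eq_zero Uᶜ (y 0) (fun i hi => hy0 i
      (fun h => (Finset.mem_compl.mp hi) (h ▸ hi0U))), norm_zero]
  -- apply the cone escape lemma
  have hesc := LSSaux.cone_escape U d ρu hρu1 hρu_le hUc y dy hdyk herr
    (by rw [ha0, hbb0]; exact ht0.le)
  -- contradiction with stability
  obtain ⟨n, hn2⟩ := pow_unbounded_of_one_lt (ε / t) (by linarith : 1 < (ρu + 1)/2)
  have h1 : ((ρu + 1)/2)^n * t ≤ ‖LSSaux.proj U (y n)‖ := by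
    have := (hesc n).2
    rw [ha0] at this
    exact this
  have h2 : ‖LSSaux.proj U (y n)‖ ≤ ‖y n‖ := LSSaux.norm_proj_le _ _
  have h3 : ‖y n‖ < ε := by
    rw [hyn]
    exact horbit n
  rw [div_lt_iff₀ ht0] at hn2
  linarith
end
end
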